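/- arXiv:0909.1273 — 4 statements merged into one kernel-verified Lean document; each statement's English description precedes it below -/
import Mathlib

section
/- Let x < y be two consecutive elements of Ξ_n (n ≥ 1) and suppose the mediant x ⊕ y belongs to Θ_k. Then for every m ≥ k, #{ ξ ∈ Ξ_m : x < ξ ≤ x ⊕ y } = F_{m−k+1}. -/
open Set Filter

/-- The mediant of two rationals (written in lowest terms). -/
def mediant (x y : ℚ) : ℚ :=
  ((x.num + y.num : ℤ) : ℚ) / ((x.den + y.den : ℕ) : ℚ)

/-- `x` and `y` are consecutive elements of the set `S`. -/
def IsConsecutive (S : Set ℚ) (x y : ℚ) : Prop :=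
  x ∈ S ∧ y ∈ S ∧ x < y ∧ ∀ z ∈ S, ¬ (x < z ∧ z < y)

/-- The Stern–Brocot sequences `ℱ_n`. -/
def sternBrocot : ℕ → Set ℚ
  | 0 => {0, 1}
  | n + 1 => sternBrocot n ∪
      {z | ∃ x y : ℚ, IsConsecutive (sternBrocot n) x y ∧ z = mediant x y}

/-- `Q_n`, the set of mediants newly inserted at step `n ≥ 1` of the
Stern–Brocot construction. -/
def newMediants (n : ℕ) : Set ℚ :=
  {z | ∃ x y : ℚ, IsConsecutive (sternBrocot (n - 1)) x y ∧ z = mediant x y}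

/-- Value of the regular continued fraction `[0; a_1, …, a_m]`. -/
def cfVal : List ℕ → ℚ
  | [] => 0
  | a :: t => 1 / ((a : ℚ) + cfVal t)

/-- `a` is the regular continued fraction expansion `[0; a_1, …, a_m]` of `x`,
with all partial quotients positive and the last one at least `2`. -/
def IsCF (x : ℚ) (a : List ℕ) : Prop :=
  (∀ ai ∈ a, 1 ≤ ai) ∧ 2 ≤ a.getLastD 0 ∧ x = cfVal a

/-- Value of `b_1 - 1/(b_2 - ⋯ - 1/b_l)` (using the convention `1/0 = 0`,
so that `rrTail [b] = b`). -/
def rrTail : List ℕ → ℚ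
  | [] => 0
  | b :: t => (b : ℚ) - 1 / rrTail t

/-- Value of the regular reduced continued fraction
`[[1; b_1, …, b_l]] = 1 - 1/(b_1 - 1/(b_2 - ⋯ - 1/b_l))`. -/
def rrcfVal (b : List ℕ) : ℚ := 1 - 1 / rrTail b

/-- `b` is the regular reduced continued fraction expansion
`[[1; b_1, …, b_l]]` of `x`, with all entries at least `2`. -/
def IsRRCF (x : ℚ) (b : List ℕ) : Prop :=
  (∀ bi ∈ b, 2 ≤ bi) ∧ x = rrcfVal b

/-- `Θ_k`: rationals in `(0,1)` whose regular reduced continued fraction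
expansion satisfies `L(x) = b_1 + ⋯ + b_l = k + 1`. -/
def Theta (k : ℕ) : Set ℚ :=
  {x | x ∈ Set.Ioo (0 : ℚ) 1 ∧ ∃ b : List ℕ, IsRRCF x b ∧ b.sum = k + 1}

/-- `Ξ_n = {0, 1} ∪ Θ_1 ∪ ⋯ ∪ Θ_n`. -/
def Xi (n : ℕ) : Set ℚ :=
  {0, 1} ∪ ⋃ k ∈ Finset.Icc 1 n, Theta k

namespace SBX

def P : List ℕ → ℤ × ℤ
  | [] => (1, 0)
  | a :: t => ((a : ℤ) * (P t).1 - (P t).2, (P t).1)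

def Valid (c : List ℕ) : Prop := ∀ x ∈ c, 2 ≤ x

lemma Valid.tail {a : ℕ} {t : List ℕ} (h : Valid (a :: t)) : Valid t :=
  fun x hx => h x (List.mem_cons_of_mem _ hx)

lemma Valid.head {a : ℕ} {t : List ℕ} (h : Valid (a :: t)) : 2 ≤ a := h a (.head _)

lemma P_basic {c : List ℕ} (h : Valid c) : (P c).2 < (P c).1 ∧ 0 ≤ (P c).2 := by
  induction c with
  | nil => simp [P]
  | cons a t ih =>
    obtain ⟨h1, h2⟩ := ih h.tail
    have ha : (2:ℤ) ≤ (a:ℤ) := by exact_mod_cast h.head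
    refine ⟨?_, by simpa [P] using le_of_lt (lt_of_le_of_lt h2 h1)⟩
    simp only [P]
    nlinarith

lemma P_fst_pos {c : List ℕ} (h : Valid c) : 0 < (P c).1 :=
  lt_of_le_of_lt (P_basic h).2 (P_basic h).1

lemma P_snd_nonneg {c : List ℕ} (h : Valid c) : 0 ≤ (P c).2 := (P_basic h).2

lemma P_snd_pos {c : List ℕ} (h : Valid c) (hne : c ≠ []) : 0 < (P c).2 := by
  cases c with
  | nil => exact absurd rfl hne
  | cons a t => simpa [P] using P_fst_pos h.tail

def nm (c : List ℕ) : ℤ := (P c).1 - (P c).2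
def dn (c : List ℕ) : ℤ := (P c).1

lemma nm_pos {c : List ℕ} (h : Valid c) : 0 < nm c := by
  have := (P_basic h).1; simp [nm]; omega

lemma dn_pos {c : List ℕ} (h : Valid c) : 0 < dn c := P_fst_pos h

lemma rrTail_eq {c : List ℕ} (h : Valid c) :
    rrTail c = ((P c).1 : ℚ) / ((P c).2 : ℚ) := by
  induction c with
  | nil => simp [rrTail, P]
  | cons a t ih =>
    have ht := ih h.tail
    have h1 : (0:ℤ) < (P t).1 := P_fst_pos h.tail
    have h1q : ((P t).1 : ℚ) ≠ 0 := by exact_mod_cast h1.ne'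
    rw [rrTail, ht, one_div_div]
    simp only [P]
    push_cast
    field_simp

lemma val_eq {c : List ℕ} (h : Valid c) :
    rrcfVal c = ((nm c : ℤ) : ℚ) / ((dn c : ℤ) : ℚ) := by
  have h1 : (0:ℤ) < (P c).1 := P_fst_pos h
  have h1q : ((P c).1 : ℚ) ≠ 0 := by exact_mod_cast h1.ne'
  rw [rrcfVal, rrTail_eq h, one_div_div]
  simp only [nm, dn]
  push_cast
  field_simp

lemma val_pos {c : List ℕ} (h : Valid c) : 0 < rrcfVal c := by
  rw [val_eq h]
  exact div_pos (by exact_mod_cast nm_pos h) (by exact_mod_cast dn_pos h)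

lemma val_le_one {c : List ℕ} (h : Valid c) : rrcfVal c ≤ 1 := by
  rw [val_eq h]
  rw [div_le_one (by exact_mod_cast dn_pos h)]
  have h2 : nm c ≤ dn c := by have := P_snd_nonneg h; simp only [nm, dn]; omega
  exact_mod_cast h2

lemma val_lt_one {c : List ℕ} (h : Valid c) (hne : c ≠ []) : rrcfVal c < 1 := by
  rw [val_eq h]
  rw [div_lt_one (by exact_mod_cast dn_pos h)]
  have h2 : nm c < dn c := by have := P_snd_pos h hne; simp only [nm, dn]; omega
  exact_mod_cast h2

lemma val_nil : rrcfVal [] = 1 := by simp [rrcfVal, rrTail]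

lemma P_cons (a : ℕ) (t : List ℕ) :
    P (a :: t) = ((a : ℤ) * (P t).1 - (P t).2, (P t).1) := rfl

lemma P_append {t : List ℕ} (ht : t ≠ []) (a : ℕ) :
    P (t ++ [a]) = ((a:ℤ) * (P t).1 - (P t.dropLast).1,
                    (a:ℤ) * (P t).2 - (P t.dropLast).2) := by
  induction t with
  | nil => exact absurd rfl ht
  | cons x s ih =>
    cases s with
    | nil =>
      simp only [List.singleton_append, P, List.dropLast_singleton, Prod.mk.injEq]
      exact ⟨by ring, trivial⟩
    | cons y s' =>
      have hs : (y :: s') ≠ [] := by simp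
      rw [List.cons_append, P_cons, ih hs, List.dropLast_cons₂]
      simp only [P_cons, Prod.mk.injEq]
      exact ⟨by ring, trivial⟩

lemma P_succ (t : List ℕ) (a : ℕ) :
    P (t ++ [a+1]) = ((P (t ++ [a])).1 + (P t).1, (P (t ++ [a])).2 + (P t).2) := by
  cases t with
  | nil =>
    simp only [List.nil_append, P, Prod.mk.injEq]
    constructor <;> (push_cast; try ring)
  | cons x s =>
    rw [P_append (by simp) (a+1), P_append (by simp) a]
    simp only [Prod.mk.injEq]
    constructor <;> (push_cast; try ring)

def Lrev : List ℕ → Option (List ℕ)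
  | [] => none
  | a :: r => if a = 2 then Lrev r else some ((a - 1) :: r)

def LL (c : List ℕ) : Option (List ℕ) := (Lrev c.reverse).map List.reverse

def Lpair (c : List ℕ) : ℤ × ℤ :=
  match LL c with
  | none => (0, 1)
  | some e => (nm e, dn e)

noncomputable def Lv (c : List ℕ) : ℚ :=
  match LL c with
  | none => 0
  | some e => rrcfVal e

noncomputable def Rv (c : List ℕ) : ℚ := rrcfVal c.dropLast

lemma LL_nil : LL [] = none := rfl

lemma LL_append_two (t : List ℕ) : LL (t ++ [2]) = LL t := by
  simp [LL, Lrev]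

lemma LL_append {a : ℕ} (t : List ℕ) (ha : a ≠ 2) : LL (t ++ [a]) = some (t ++ [a - 1]) := by
  simp [LL, Lrev, ha]

lemma Lrev_spec : ∀ r : List ℕ, (∀ x ∈ r, 2 ≤ x) → ∀ e, Lrev r = some e →
    (∀ x ∈ e, 2 ≤ x) ∧ e ≠ [] ∧ e.sum < r.sum := by
  intro r
  induction r with
  | nil => intro _ e h; simp [Lrev] at h
  | cons a r' ih =>
    intro hv e he
    by_cases ha : a = 2
    · simp only [Lrev, ha, if_pos rfl] at he
      obtain ⟨h1, h2, h3⟩ := ih (fun x hx => hv x (.tail _ hx)) e he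
      refine ⟨h1, h2, by simp; omega⟩
    · simp only [Lrev, if_neg ha] at he
      have ha2 : 2 ≤ a := hv a (.head _)
      rw [Option.some.injEq] at he
      subst he
      refine ⟨?_, by simp, by simp; omega⟩
      intro x hx
      rcases List.mem_cons.mp hx with h | h
      · omega
      · exact hv x (.tail _ h)

lemma LL_spec {c : List ℕ} (h : Valid c) {e : List ℕ} (he : LL c = some e) :
    Valid e ∧ e ≠ [] ∧ e.sum < c.sum := by
  simp only [LL, Option.map_eq_some_iff] at he
  obtain ⟨e', he', rfl⟩ := he
  have hv : ∀ x ∈ c.reverse, 2 ≤ x := fun x hx => h x (List.mem_reverse.mp hx)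
  obtain ⟨h1, h2, h3⟩ := Lrev_spec c.reverse hv e' he'
  refine ⟨fun x hx => h1 x (List.mem_reverse.mp hx), by simpa using h2, ?_⟩
  rw [List.sum_reverse]
  rw [← List.sum_reverse c]
  exact h3

lemma concat_cases (c : List ℕ) (hne : c ≠ []) : ∃ t a, c = t ++ [a] := by
  rcases List.eq_nil_or_concat c with h | ⟨t, a, h⟩
  · exact absurd h hne
  · exact ⟨t, a, by simpa [List.concat_eq_append] using h⟩

/-- N1 : mediant decomposition of the pair of `c` into left-neighbor pair plus
pair of `dropLast c`. -/
lemma N1 : ∀ c : List ℕ, Valid c → c ≠ [] →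
    nm c = (Lpair c).1 + nm c.dropLast ∧ dn c = (Lpair c).2 + dn c.dropLast := by
  intro c
  induction c using List.reverseRecOn with
  | nil => intro _ h; exact absurd rfl h
  | append_singleton t a ih =>
    intro hv _
    have ha2 : 2 ≤ a := hv a (by simp)
    have hvt : Valid t := fun x hx => hv x (by simp [hx])
    rw [List.dropLast_concat]
    by_cases ha : a = 2
    · subst ha
      have hLp : Lpair (t ++ [2]) = Lpair t := by unfold Lpair; rw [LL_append_two]
      rcases List.eq_nil_or_concat t with rfl | ⟨s, b, hsb⟩
      · constructor <;> simp [nm, dn, Lpair, LL, Lrev, P]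
      · rw [List.concat_eq_append] at hsb
        subst hsb
        obtain ⟨ih1, ih2⟩ := ih hvt (by simp)
        have hP := P_append (t := s ++ [b]) (by simp) 2
        rw [List.dropLast_concat] at ih1 ih2 hP
        constructor
        · simp only [nm, hP, hLp] at *
          push_cast at *
          linarith [ih1, ih2]
        · simp only [dn, nm, hP, hLp] at *
          push_cast at *
          linarith [ih1, ih2]
    · have hLp : Lpair (t ++ [a]) = (nm (t ++ [a-1]), dn (t ++ [a-1])) := by
        unfold Lpair; rw [LL_append t ha]
      have hs : a - 1 + 1 = a := by omega
      have hP := P_succ t (a - 1)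
      rw [hs] at hP
      constructor
      · simp only [nm, hP, hLp]; (try ring)
      · simp only [dn, hP, hLp]; (try ring)

def d2 (u v : ℤ × ℤ) : ℤ := v.1 * u.2 - u.1 * v.2

lemma sum_concat (t : List ℕ) (a : ℕ) : (t ++ [a]).sum = t.sum + a := by simp

lemma valid_nil : Valid ([] : List ℕ) := by intro x hx; cases hx

lemma valid_concat {t : List ℕ} {a : ℕ} (h : Valid (t ++ [a])) : Valid t :=
  fun x hx => h x (by simp [hx])

lemma valid_last {t : List ℕ} {a : ℕ} (h : Valid (t ++ [a])) : 2 ≤ a := h a (by simp)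

lemma valid_concat_mk {t : List ℕ} {a : ℕ} (ht : Valid t) (ha : 2 ≤ a) : Valid (t ++ [a]) := by
  intro x hx
  rcases List.mem_append.mp hx with h | h
  · exact ht x h
  · simp at h; omega

lemma DET : ∀ N c, c.sum ≤ N → Valid c →
    d2 (Lpair c) (nm c, dn c) = 1 ∧
    (c ≠ [] → d2 (nm c, dn c) (nm c.dropLast, dn c.dropLast) = 1) := by
  have base : d2 (Lpair []) (nm [], dn []) = 1 := by
    norm_num [d2, Lpair, LL_nil, nm, dn, P]
  intro N
  induction N with
  | zero =>
    intro c hc hv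
    have hcn : c = [] := by
      cases c with
      | nil => rfl
      | cons a t => have := hv a (.head _); simp at hc; omega
    subst hcn
    exact ⟨base, fun h => absurd rfl h⟩
  | succ N ih =>
    intro c hc hv
    rcases eq_or_ne c [] with rfl | hne
    · exact ⟨base, fun h => absurd rfl h⟩
    obtain ⟨t, a, rfl⟩ := concat_cases c hne
    have ha2 : 2 ≤ a := valid_last hv
    have hvt : Valid t := valid_concat hv
    have hsum : t.sum + a ≤ N + 1 := by rw [← sum_concat]; exact hc
    obtain ⟨hn1, hd1⟩ := N1 (t ++ [a]) hv (by simp)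
    rw [List.dropLast_concat] at hn1 hd1
    have key : d2 (Lpair (t ++ [a])) (nm t, dn t) = 1 := by
      by_cases ha : a = 2
      · subst ha
        have hLp : Lpair (t ++ [2]) = Lpair t := by unfold Lpair; rw [LL_append_two]
        rw [hLp]
        exact (ih t (by omega) hvt).1
      · have hLp : Lpair (t ++ [a]) = (nm (t ++ [a - 1]), dn (t ++ [a - 1])) := by
          unfold Lpair; rw [LL_append t ha]
        rw [hLp]
        have hv' : Valid (t ++ [a - 1]) := valid_concat_mk hvt (by omega)
        have h2 := (ih (t ++ [a - 1]) (by rw [sum_concat]; omega) hv').2 (by simp)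
        rw [List.dropLast_concat] at h2
        exact h2
    refine ⟨?_, fun _ => ?_⟩
    · simp only [d2] at key ⊢
      rw [hn1, hd1]
      ring_nf
      ring_nf at key
      linarith [key]
    · simp only [d2] at key ⊢
      rw [List.dropLast_concat, hn1, hd1]
      ring_nf
      ring_nf at key
      linarith [key]

lemma det_L_val {c : List ℕ} (h : Valid c) : d2 (Lpair c) (nm c, dn c) = 1 :=
  (DET c.sum c le_rfl h).1

lemma det_val_R {c : List ℕ} (h : Valid c) (hne : c ≠ []) :
    d2 (nm c, dn c) (nm c.dropLast, dn c.dropLast) = 1 :=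
  (DET c.sum c le_rfl h).2 hne

lemma det_L_R {c : List ℕ} (h : Valid c) (hne : c ≠ []) :
    d2 (Lpair c) (nm c.dropLast, dn c.dropLast) = 1 := by
  have h1 := det_L_val h
  have h2 := N1 c h hne
  simp only [d2] at h1 ⊢
  rw [h2.1, h2.2] at h1
  linarith [h1]

lemma num_den_val {c : List ℕ} (h : Valid c) :
    (rrcfVal c).num = nm c ∧ ((rrcfVal c).den : ℤ) = dn c := by
  rcases eq_or_ne c [] with rfl | hne
  · rw [val_nil]; norm_num [nm, dn, P]
  · have hdet := det_val_R h hne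
    simp only [d2] at hdet
    have hcop : IsCoprime (nm c) (dn c) :=
      ⟨-(dn c.dropLast), nm c.dropLast, by linarith [hdet]⟩
    have hcop2 : Nat.Coprime (nm c).natAbs (dn c).natAbs :=
      Int.isCoprime_iff_gcd_eq_one.mp hcop
    rw [val_eq h]
    exact ⟨Rat.num_div_eq_of_coprime (dn_pos h) hcop2,
           Rat.den_div_eq_of_coprime (dn_pos h) hcop2⟩

lemma div_lt_div_of_det {p q r s : ℤ} (hq : 0 < q) (hs : 0 < s)
    (h : r * q - p * s = 1) : (p : ℚ) / q < (r : ℚ) / s := by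
  rw [div_lt_div_iff₀ (by exact_mod_cast hq) (by exact_mod_cast hs)]
  have hlt : p * s < r * q := by omega
  exact_mod_cast hlt

lemma Lv_none {c : List ℕ} (h : LL c = none) : Lv c = 0 := by
  unfold Lv; rw [h]

lemma Lv_some {c e : List ℕ} (h : LL c = some e) : Lv c = rrcfVal e := by
  unfold Lv; rw [h]

lemma Lpair_none {c : List ℕ} (h : LL c = none) : Lpair c = (0, 1) := by
  unfold Lpair; rw [h]

lemma Lpair_some {c e : List ℕ} (h : LL c = some e) : Lpair c = (nm e, dn e) := by
  unfold Lpair; rw [h]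

lemma Lpair_snd_pos {c : List ℕ} (h : Valid c) : 0 < (Lpair c).2 := by
  cases hLL : LL c with
  | none => rw [Lpair_none hLL]; norm_num
  | some e => rw [Lpair_some hLL]; exact dn_pos (LL_spec h hLL).1

lemma Lv_cast {c : List ℕ} (h : Valid c) :
    Lv c = ((Lpair c).1 : ℚ) / ((Lpair c).2 : ℚ) := by
  cases hLL : LL c with
  | none => rw [Lv_none hLL, Lpair_none hLL]; norm_num
  | some e => rw [Lv_some hLL, Lpair_some hLL]; exact val_eq (LL_spec h hLL).1

lemma Lv_nonneg {c : List ℕ} (h : Valid c) : 0 ≤ Lv c := by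
  cases hLL : LL c with
  | none => rw [Lv_none hLL]
  | some e => rw [Lv_some hLL]; exact (val_pos (LL_spec h hLL).1).le

lemma Lv_lt_val {c : List ℕ} (h : Valid c) : Lv c < rrcfVal c := by
  rw [Lv_cast h, val_eq h]
  exact div_lt_div_of_det (Lpair_snd_pos h) (dn_pos h) (det_L_val h)

lemma val_lt_Rv {c : List ℕ} (h : Valid c) (hne : c ≠ []) : rrcfVal c < Rv c := by
  have hd : Valid c.dropLast := fun x hx => h x (List.dropLast_subset _ hx)
  rw [Rv, val_eq h, val_eq hd]
  exact div_lt_div_of_det (dn_pos h) (dn_pos hd) (det_val_R h hne)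

lemma Lv_append_two (t : List ℕ) : Lv (t ++ [2]) = Lv t := by
  unfold Lv; rw [LL_append_two]

lemma Rv_concat (t : List ℕ) (a : ℕ) : Rv (t ++ [a]) = rrcfVal t := by
  unfold Rv; rw [List.dropLast_concat]

lemma Lv_concat {a : ℕ} (t : List ℕ) (ha : a ≠ 2) :
    Lv (t ++ [a]) = rrcfVal (t ++ [a - 1]) := by
  unfold Lv; rw [LL_append t ha]

lemma medmin {a b r s : ℤ} (hb : 0 < b) (hs : 0 < s) (hdet : r * b - a * s = 1)
    {q : ℚ} (h1 : (a : ℚ) / b < q) (h2 : q < (r : ℚ) / s) :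
    b + s ≤ (q.den : ℤ) := by
  have hn : (0 : ℤ) < (q.den : ℤ) := by exact_mod_cast q.pos
  have hq : q = (q.num : ℚ) / (q.den : ℚ) := (Rat.num_div_den q).symm
  rw [hq] at h1 h2
  rw [div_lt_div_iff₀ (by exact_mod_cast hb) (by exact_mod_cast hn)] at h1
  rw [div_lt_div_iff₀ (by exact_mod_cast hn) (by exact_mod_cast hs)] at h2
  have h1' : a * (q.den : ℤ) < q.num * b := by exact_mod_cast h1
  have h2' : q.num * s < r * (q.den : ℤ) := by exact_mod_cast h2
  have hα : 1 ≤ q.num * b - a * (q.den : ℤ) := by omega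
  have hβ : 1 ≤ r * (q.den : ℤ) - q.num * s := by omega
  have hkey : (q.den : ℤ) = b * (r * (q.den : ℤ) - q.num * s)
      + s * (q.num * b - a * (q.den : ℤ)) := by
    linear_combination (-(q.den : ℤ)) * hdet
  nlinarith [hα, hβ, hb, hs]

lemma rrTail_gt_one {c : List ℕ} (h : Valid c) (hne : c ≠ []) : 1 < rrTail c := by
  rw [rrTail_eq h]
  have h2 : (0 : ℤ) < (P c).2 := P_snd_pos h hne
  rw [one_lt_div (by exact_mod_cast h2)]
  exact_mod_cast (P_basic h).1

lemma one_div_rrTail_bds {s : List ℕ} (hs : Valid s) :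
    0 ≤ 1 / rrTail s ∧ 1 / rrTail s < 1 := by
  rcases eq_or_ne s [] with rfl | hs0
  · simp [rrTail]
  · have h1 := rrTail_gt_one hs hs0
    have h0 : (0:ℚ) < rrTail s := by linarith
    constructor
    · positivity
    · rw [div_lt_one h0]; linarith

lemma rrTail_inj : ∀ c : List ℕ, Valid c → ∀ c', Valid c' → c ≠ [] → c' ≠ [] →
    rrTail c = rrTail c' → c = c' := by
  intro c
  induction c with
  | nil => intro _ c' _ h _ _; exact absurd rfl h
  | cons a t ih =>
    intro hv c' hv' _ hne' heq
    cases c' with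
    | nil => exact absurd rfl hne'
    | cons a' t' =>
      obtain ⟨h0, h1⟩ := one_div_rrTail_bds hv.tail
      obtain ⟨h0', h1'⟩ := one_div_rrTail_bds hv'.tail
      rw [rrTail, rrTail] at heq
      have haa : a = a' := by
        have hq1 : (a : ℚ) < (a' : ℚ) + 1 := by linarith
        have hq2 : (a' : ℚ) < (a : ℚ) + 1 := by linarith
        have hn1 : a < a' + 1 := by exact_mod_cast hq1
        have hn2 : a' < a + 1 := by exact_mod_cast hq2
        omega
      subst haa
      have hu : 1 / rrTail t = 1 / rrTail t' := by linarith
      rcases eq_or_ne t [] with rfl | ht0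
      · rcases eq_or_ne t' [] with rfl | ht0'
        · rfl
        · exfalso
          have := rrTail_gt_one hv'.tail ht0'
          rw [show rrTail [] = 0 from rfl] at hu
          simp only [div_zero] at hu
          have : 0 < 1 / rrTail t' := by positivity
          linarith
      · rcases eq_or_ne t' [] with rfl | ht0'
        · exfalso
          have := rrTail_gt_one hv.tail ht0
          rw [show rrTail [] = 0 from rfl] at hu
          simp only [div_zero] at hu
          have hpos : 0 < 1 / rrTail t := by positivity
          linarith
        · have ht1 := rrTail_gt_one hv.tail ht0
          have ht1' := rrTail_gt_one hv'.tail ht0'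
          have : rrTail t = rrTail t' := by
            field_simp at hu
            linarith
          rw [ih hv.tail t' hv'.tail ht0 ht0' this]

lemma val_inj {c c' : List ℕ} (h : Valid c) (h' : Valid c')
    (he : rrcfVal c = rrcfVal c') : c = c' := by
  rcases eq_or_ne c [] with rfl | hne
  · rcases eq_or_ne c' [] with rfl | hne'
    · rfl
    · exfalso; rw [val_nil] at he
      exact absurd he.symm (ne_of_lt (val_lt_one h' hne'))
  · rcases eq_or_ne c' [] with rfl | hne'
    · exfalso; rw [val_nil] at he
      exact absurd he (ne_of_lt (val_lt_one h hne))
    · have ht := rrTail_gt_one h hne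
      have ht' := rrTail_gt_one h' hne'
      have : rrTail c = rrTail c' := by
        rw [rrcfVal, rrcfVal] at he
        have h2 : 1 / rrTail c = 1 / rrTail c' := by linarith
        field_simp at h2
        linarith
      exact rrTail_inj c h c' h' hne hne' this

lemma valid_dropLast {c : List ℕ} (h : Valid c) : Valid c.dropLast :=
  fun x hx => h x (List.dropLast_subset _ hx)

/-- denominator of `rrcfVal g` is at least `dn c` when `rrcfVal g` lies strictly
between the Stern-Brocot neighbours of `c`; moreover (key step) it is at least
`dn c'` for the child `c'` of `c` whose interval contains it. -/
lemma den_ge {c g : List ℕ} (hc : Valid c) (hcne : c ≠ []) (hg : Valid g)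
    (hlo : Lv c < rrcfVal g) (hhi : rrcfVal g < Rv c) :
    dn c ≤ dn g := by
  have hdL : Valid c.dropLast := valid_dropLast hc
  have hdet := det_L_R hc hcne
  simp only [d2] at hdet
  have h1 : ((Lpair c).1 : ℚ) / ((Lpair c).2 : ℚ) < rrcfVal g := by
    rw [← Lv_cast hc]; exact hlo
  have h2 : rrcfVal g < ((nm c.dropLast : ℤ) : ℚ) / ((dn c.dropLast : ℤ) : ℚ) := by
    rw [← val_eq hdL]; exact hhi
  have hmm := medmin (Lpair_snd_pos hc) (dn_pos hdL) hdet h1 h2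
  have hden : ((rrcfVal g).den : ℤ) = dn g := (num_den_val hg).2
  have hN1 := (N1 c hc hcne).2
  omega

lemma dn_append_two {c : List ℕ} (hc : Valid c) (hcne : c ≠ []) :
    dn c + 1 ≤ dn (c ++ [2]) := by
  have hv' : Valid (c ++ [2]) := valid_concat_mk hc le_rfl
  have h := (N1 (c ++ [2]) hv' (by simp)).2
  rw [List.dropLast_concat] at h
  have hLp : Lpair (c ++ [2]) = Lpair c := by unfold Lpair; rw [LL_append_two]
  rw [hLp] at h
  have := Lpair_snd_pos hc
  omega

lemma dn_succ {t : List ℕ} (a : ℕ) (ht : Valid t) :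
    dn (t ++ [a]) + 1 ≤ dn (t ++ [a + 1]) := by
  have h := P_succ t a
  have h2 := dn_pos ht
  simp only [dn] at h2 ⊢
  rw [h]
  omega

lemma descent : ∀ N c g, Valid c → c ≠ [] → Valid g → g ≠ [] →
    ((P g).1 - (P c).1).toNat ≤ N →
    Lv c < rrcfVal g → rrcfVal g < Rv c → c.sum ≤ g.sum := by
  intro N
  induction N using Nat.strong_induction_on with
  | _ N ih =>
    intro c g hc hcne hg hgne hN hlo hhi
    rcases lt_trichotomy (rrcfVal g) (rrcfVal c) with hlt | heq | hgt
    · -- g in the interval of c ++ [2]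
      set c' := c ++ [2] with hc'
      have hv' : Valid c' := valid_concat_mk hc le_rfl
      have hlo' : Lv c' < rrcfVal g := by rw [hc', Lv_append_two]; exact hlo
      have hhi' : rrcfVal g < Rv c' := by rw [hc', Rv_concat]; exact hlt
      have hd1 : dn c + 1 ≤ dn c' := dn_append_two hc hcne
      have hd2 : dn c' ≤ dn g := den_ge hv' (by simp [hc']) hg hlo' hhi'
      have hdc := dn_pos hc
      have hmeas : ((P g).1 - (P c').1).toNat < N := by
        simp only [dn] at hd1 hd2 hdc
        omega
      have := ih _ hmeas c' g hv' (by simp [hc']) hg hgne le_rfl hlo' hhi'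
      have hsum : c'.sum = c.sum + 2 := by rw [hc', sum_concat]
      omega
    · have := val_inj hg hc heq
      subst this
      exact le_rfl
    · obtain ⟨t, a, rfl⟩ := concat_cases c hcne
      have ha2 : 2 ≤ a := valid_last hc
      have hvt : Valid t := valid_concat hc
      set c' := t ++ [a + 1] with hc'
      have hv' : Valid c' := valid_concat_mk hvt (by omega)
      have hlo' : Lv c' < rrcfVal g := by
        rw [hc', Lv_concat t (by omega)]
        simpa using hgt
      have hhi' : rrcfVal g < Rv c' := by
        rw [hc', Rv_concat]
        rw [Rv_concat] at hhi
        exact hhi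
      have hd1 : dn (t ++ [a]) + 1 ≤ dn c' := dn_succ a hvt
      have hd2 : dn c' ≤ dn g := den_ge hv' (by simp [hc']) hg hlo' hhi'
      have hdc := dn_pos hc
      have hmeas : ((P g).1 - (P c').1).toNat < N := by
        simp only [dn] at hd1 hd2 hdc
        omega
      have := ih _ hmeas c' g hv' (by simp [hc']) hg hgne le_rfl hlo' hhi'
      have hsum : c'.sum = (t ++ [a]).sum + 1 := by rw [hc', sum_concat, sum_concat]; omega
      omega

lemma valid_sum_ge {c : List ℕ} (h : Valid c) (hne : c ≠ []) : 2 ≤ c.sum := by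
  cases c with
  | nil => exact absurd rfl hne
  | cons a t =>
    have := h a (.head _)
    simp only [List.sum_cons]
    omega

lemma mem_Theta {q : ℚ} {k : ℕ} (hk : 1 ≤ k) :
    q ∈ Theta k ↔ ∃ c, Valid c ∧ c ≠ [] ∧ c.sum = k + 1 ∧ q = rrcfVal c := by
  constructor
  · rintro ⟨hIoo, b, ⟨hbv, hbval⟩, hbsum⟩
    refine ⟨b, hbv, ?_, hbsum, hbval⟩
    rintro rfl
    rw [List.sum_nil] at hbsum
    omega
  · rintro ⟨c, hcv, hcne, hcsum, rfl⟩
    exact ⟨⟨val_pos hcv, val_lt_one hcv hcne⟩, c, ⟨hcv, rfl⟩, hcsum⟩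

lemma mem_Xi {q : ℚ} {n : ℕ} :
    q ∈ Xi n ↔ q = 0 ∨ ∃ c, Valid c ∧ c.sum ≤ n + 1 ∧ q = rrcfVal c := by
  constructor
  · intro hq
    rcases hq with hq | hq
    · rcases hq with hq | hq
      · exact Or.inl hq
      · exact Or.inr ⟨[], valid_nil, by simp, by simp at hq; rw [hq, val_nil]⟩
    · simp only [Set.mem_iUnion] at hq
      obtain ⟨k, hk, hmem⟩ := hq
      simp only [Finset.mem_Icc] at hk
      obtain ⟨c, hcv, hcne, hcsum, rfl⟩ := (mem_Theta hk.1).mp hmem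
      exact Or.inr ⟨c, hcv, by omega, rfl⟩
  · intro hq
    rcases hq with rfl | ⟨c, hcv, hcsum, rfl⟩
    · exact Or.inl (Or.inl rfl)
    · rcases eq_or_ne c [] with rfl | hcne
      · exact Or.inl (Or.inr (by rw [val_nil]; rfl))
      · have h2 := valid_sum_ge hcv hcne
        refine Or.inr ?_
        simp only [Set.mem_iUnion]
        refine ⟨c.sum - 1, ?_, ?_⟩
        · simp only [Finset.mem_Icc]; omega
        · exact (mem_Theta (by omega)).mpr ⟨c, hcv, hcne, by omega, rfl⟩

lemma dn_le_pow {c : List ℕ} (h : Valid c) : dn c ≤ 2 ^ c.sum := by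
  induction c with
  | nil => simp [dn, P]
  | cons a t ih =>
    have ht := ih h.tail
    have h2 := P_basic h.tail
    have hd := dn_pos h.tail
    have ha : 2 ≤ a := h.head
    have hpow : (a : ℤ) ≤ 2 ^ a := by
      exact_mod_cast (Nat.lt_two_pow_self (n := a)).le
    simp only [dn, P, List.sum_cons] at *
    have h3 : (a:ℤ) * (P t).1 - (P t).2 ≤ (a:ℤ) * (P t).1 := by omega
    calc (a:ℤ) * (P t).1 - (P t).2 ≤ (a:ℤ) * (P t).1 := h3
      _ ≤ (2:ℤ) ^ a * 2 ^ t.sum := by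
          apply mul_le_mul hpow ht (by omega) (by positivity)
      _ = 2 ^ (a + t.sum) := by rw [pow_add]

lemma finite_vals (M : ℕ) {S : Set ℚ}
    (hS : ∀ q ∈ S, ∃ c, Valid c ∧ c.sum ≤ M ∧ q = rrcfVal c) : S.Finite := by
  have hfin : (((Finset.range (2 ^ M + 1) ×ˢ Finset.range (2 ^ M + 1)).image
      (fun p : ℕ × ℕ => (p.1 : ℚ) / (p.2 : ℚ))) : Set ℚ).Finite :=
    Finset.finite_toSet _
  apply hfin.subset
  intro q hq
  obtain ⟨c, hcv, hcs, rfl⟩ := hS q hq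
  have hnm := nm_pos hcv
  have hdn := dn_pos hcv
  have hle : nm c ≤ dn c := by
    have := P_snd_nonneg hcv
    simp only [nm, dn]
    omega
  have hpow : dn c ≤ 2 ^ M := by
    have h1 := dn_le_pow hcv
    have h2 : (2:ℤ) ^ c.sum ≤ (2:ℤ) ^ M := by
      apply pow_le_pow_right₀ (by norm_num) hcs
    omega
  have hpowN : ((2 ^ M : ℕ) : ℤ) = (2:ℤ) ^ M := by push_cast; ring
  simp only [Finset.coe_image, Set.mem_image, Finset.mem_coe, Finset.mem_product,
    Finset.mem_range]
  refine ⟨((nm c).toNat, (dn c).toNat), ⟨?_, ?_⟩, ?_⟩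
  · omega
  · omega
  · have h1 : ((nm c).toNat : ℤ) = nm c := Int.toNat_of_nonneg hnm.le
    have h2 : ((dn c).toNat : ℤ) = dn c := Int.toNat_of_nonneg hdn.le
    have h1q : (((nm c).toNat : ℕ) : ℚ) = ((nm c : ℤ) : ℚ) := by
      exact_mod_cast congrArg (fun z : ℤ => (z : ℚ)) h1
    have h2q : (((dn c).toNat : ℕ) : ℚ) = ((dn c : ℤ) : ℚ) := by
      exact_mod_cast congrArg (fun z : ℤ => (z : ℚ)) h2
    show (((nm c).toNat : ℕ) : ℚ) / (((dn c).toNat : ℕ) : ℚ) = rrcfVal c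
    rw [h1q, h2q, val_eq hcv]

lemma Lv_lt_Rv {c : List ℕ} (h : Valid c) (hne : c ≠ []) : Lv c < Rv c :=
  lt_trans (Lv_lt_val h) (val_lt_Rv h hne)

def Fset (c : List ℕ) (M : ℕ) : Set ℚ :=
  {q | ∃ g, Valid g ∧ g ≠ [] ∧ g.sum ≤ M ∧ q = rrcfVal g ∧ Lv c < q ∧ q < Rv c}

lemma Fset_finite (c : List ℕ) (M : ℕ) : (Fset c M).Finite := by
  apply finite_vals M
  rintro q ⟨g, hgv, _, hgs, rfl, _, _⟩
  exact ⟨g, hgv, hgs, rfl⟩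

lemma Fset_empty {c : List ℕ} (hc : Valid c) (hcne : c ≠ []) {M : ℕ}
    (hM : M < c.sum) : Fset c M = ∅ := by
  ext q
  simp only [Fset, Set.mem_setOf_eq, Set.mem_empty_iff_false, iff_false]
  rintro ⟨g, hgv, hgne, hgs, rfl, hlo, hhi⟩
  have := descent ((P g).1 - (P c).1).toNat c g hc hcne hgv hgne le_rfl hlo hhi
  omega

lemma Fcount : ∀ μ M c, Valid c → c ≠ [] → M + 1 - c.sum ≤ μ →
    (Fset c M).ncard = Nat.fib (M + 3 - c.sum) - 1 := by
  intro μ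
  induction μ with
  | zero =>
    intro M c hc hcne hμ
    have hM : M < c.sum := by omega
    rw [Fset_empty hc hcne hM]
    have h1 : M + 3 - c.sum ≤ 2 := by omega
    have h2 : Nat.fib (M + 3 - c.sum) ≤ 1 := by
      calc Nat.fib (M + 3 - c.sum) ≤ Nat.fib 2 := Nat.fib_mono h1
        _ = 1 := by norm_num
    simp only [Set.ncard_empty]
    omega
  | succ μ ih =>
    intro M c hc hcne hμ
    rcases Nat.lt_or_ge M c.sum with hM | hM
    · -- same as base
      rw [Fset_empty hc hcne hM]
      have h1 : M + 3 - c.sum ≤ 2 := by omega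
      have h2 : Nat.fib (M + 3 - c.sum) ≤ 1 := by
        calc Nat.fib (M + 3 - c.sum) ≤ Nat.fib 2 := Nat.fib_mono h1
          _ = 1 := by norm_num
      simp only [Set.ncard_empty]
      omega
    · obtain ⟨t, a, rfl⟩ := concat_cases c hcne
      have ha2 : 2 ≤ a := valid_last hc
      have hvt : Valid t := valid_concat hc
      have hv2 : Valid (t ++ [a] ++ [2]) := valid_concat_mk hc le_rfl
      have hv1 : Valid (t ++ [a + 1]) := valid_concat_mk hvt (by omega)
      -- interval identities
      have hI1 : Lv (t ++ [a] ++ [2]) = Lv (t ++ [a]) := Lv_append_two _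
      have hI2 : Rv (t ++ [a] ++ [2]) = rrcfVal (t ++ [a]) := Rv_concat _ _
      have hI3 : Lv (t ++ [a + 1]) = rrcfVal (t ++ [a]) := by
        rw [Lv_concat t (by omega)]
        norm_num
      have hI4 : Rv (t ++ [a + 1]) = Rv (t ++ [a]) := by
        rw [Rv_concat, Rv_concat]
      -- set splitting
      have hsplit : Fset (t ++ [a]) M =
          {rrcfVal (t ++ [a])} ∪ (Fset (t ++ [a] ++ [2]) M ∪ Fset (t ++ [a + 1]) M) := by
        ext q
        simp only [Fset, Set.mem_setOf_eq, Set.mem_union, Set.mem_singleton_iff]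
        constructor
        · rintro ⟨g, hgv, hgne, hgs, rfl, hlo, hhi⟩
          rcases lt_trichotomy (rrcfVal g) (rrcfVal (t ++ [a])) with hlt | heq | hgt
          · exact Or.inr (Or.inl ⟨g, hgv, hgne, hgs, rfl, by rw [hI1]; exact hlo,
              by rw [hI2]; exact hlt⟩)
          · exact Or.inl heq
          · exact Or.inr (Or.inr ⟨g, hgv, hgne, hgs, rfl, by rw [hI3]; exact hgt,
              by rw [hI4]; exact hhi⟩)
        · rintro (rfl | ⟨g, hgv, hgne, hgs, rfl, hlo, hhi⟩ | ⟨g, hgv, hgne, hgs, rfl, hlo, hhi⟩)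
          · exact ⟨t ++ [a], hc, by simp, by rw [sum_concat] at *; omega, rfl,
              Lv_lt_val hc, val_lt_Rv hc (by simp)⟩
          · rw [hI1] at hlo
            rw [hI2] at hhi
            exact ⟨g, hgv, hgne, hgs, rfl, hlo, lt_trans hhi (val_lt_Rv hc (by simp))⟩
          · rw [hI3] at hlo
            rw [hI4] at hhi
            exact ⟨g, hgv, hgne, hgs, rfl, lt_trans (Lv_lt_val hc) hlo, hhi⟩
      -- disjointness
      have hd1 : Disjoint {rrcfVal (t ++ [a])} (Fset (t ++ [a] ++ [2]) M ∪ Fset (t ++ [a + 1]) M) := by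
        rw [Set.disjoint_left]
        rintro q rfl (⟨g, _, _, _, hq, _, hhi⟩ | ⟨g, _, _, _, hq, hlo, _⟩)
        · rw [hI2] at hhi; exact lt_irrefl _ hhi
        · rw [hI3] at hlo; exact lt_irrefl _ hlo
      have hd2 : Disjoint (Fset (t ++ [a] ++ [2]) M) (Fset (t ++ [a + 1]) M) := by
        rw [Set.disjoint_left]
        rintro q ⟨g, _, _, _, hq, _, hhi⟩ ⟨g', _, _, _, hq', hlo', _⟩
        rw [hI2] at hhi
        rw [hI3] at hlo'
        exact lt_irrefl _ (hhi.trans hlo')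
      -- counts
      have hc1 := ih M (t ++ [a] ++ [2]) hv2 (by simp)
        (by simp only [sum_concat] at hμ hM ⊢; omega)
      have hc2 := ih M (t ++ [a + 1]) hv1 (by simp)
        (by simp only [sum_concat] at hμ hM ⊢; omega)
      simp only [sum_concat] at hc1 hc2
      rw [hsplit, Set.ncard_union_eq hd1 (Set.finite_singleton _)
            ((Fset_finite _ _).union (Fset_finite _ _)),
          Set.ncard_union_eq hd2 (Fset_finite _ _) (Fset_finite _ _),
          Set.ncard_singleton, hc1, hc2]
      simp only [sum_concat] at hM ⊢
      obtain ⟨r, hr⟩ : ∃ r, M = t.sum + a + r := ⟨M - (t.sum + a), by omega⟩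
      subst hr
      have eA : t.sum + a + r + 3 - (t.sum + a + 2) = r + 1 := by omega
      have eB : t.sum + a + r + 3 - (t.sum + (a + 1)) = r + 2 := by omega
      have eC : t.sum + a + r + 3 - (t.sum + a) = r + 3 := by omega
      rw [eA, eB, eC]
      have hf3 : Nat.fib (r + 3) = Nat.fib (r + 1) + Nat.fib (r + 2) := Nat.fib_add_two
      have hp1 : 1 ≤ Nat.fib (r + 1) := Nat.fib_pos.mpr (by omega)
      have hp2 : 1 ≤ Nat.fib (r + 2) := Nat.fib_pos.mpr (by omega)
      omega

lemma nm_succ (t : List ℕ) (a : ℕ) : nm (t ++ [a + 1]) = nm (t ++ [a]) + nm t := by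
  have h := P_succ t a
  simp only [nm, h]
  ring

lemma dn_succ_eq (t : List ℕ) (a : ℕ) : dn (t ++ [a + 1]) = dn (t ++ [a]) + dn t := by
  have h := P_succ t a
  simp only [dn, h]

lemma mediant_of_pairs {u v : ℚ} {c : List ℕ} (hc : Valid c)
    (hnum : u.num + v.num = nm c) (hden : (u.den : ℤ) + (v.den : ℤ) = dn c) :
    mediant u v = rrcfVal c := by
  rw [mediant, val_eq hc, ← hnum, ← hden]
  push_cast
  ring_nf

lemma pred_exists (n : ℕ) (hn : 1 ≤ n) {d : List ℕ} (hd : Valid d) (hds : d.sum ≤ n + 1) :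
    ∃ p c, Valid c ∧ c ≠ [] ∧ Lv c = p ∧
      p ∈ Xi n ∧ p < rrcfVal d ∧ (∀ w ∈ Xi n, ¬(p < w ∧ w < rrcfVal d)) ∧
      mediant p (rrcfVal d) = rrcfVal c := by
  by_cases hcase : d.sum + 2 ≤ n + 1
  · -- case (i)
    set j := n + 1 - d.sum with hj
    have hj2 : 2 ≤ j := by omega
    have hvdj : Valid (d ++ [j]) := valid_concat_mk hd hj2
    have hvc : Valid (d ++ [j + 1]) := valid_concat_mk hd (by omega)
    refine ⟨rrcfVal (d ++ [j]), d ++ [j + 1], hvc, by simp, ?_, ?_, ?_, ?_, ?_⟩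
    · rw [Lv_concat d (by omega)]
      norm_num
    · exact mem_Xi.mpr (Or.inr ⟨d ++ [j], hvdj, by rw [sum_concat]; omega, rfl⟩)
    · have h := val_lt_Rv hvdj (by simp)
      rwa [Rv_concat] at h
    · intro w hw ⟨hw1, hw2⟩
      rcases mem_Xi.mp hw with rfl | ⟨g, hgv, hgs, rfl⟩
      · exact absurd hw1 (not_lt.mpr (val_pos hvdj).le)
      · rcases eq_or_ne g [] with rfl | hgne
        · rw [val_nil] at hw2
          exact absurd hw2 (not_lt.mpr (val_le_one hd))
        · have hlo : Lv (d ++ [j + 1]) < rrcfVal g := by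
            rw [Lv_concat d (by omega)]
            norm_num
            exact hw1
          have hhi : rrcfVal g < Rv (d ++ [j + 1]) := by
            rw [Rv_concat]
            exact hw2
          have := descent _ _ _ hvc (by simp) hgv hgne le_rfl hlo hhi
          rw [sum_concat] at this
          omega
    · apply mediant_of_pairs hvc
      · rw [(num_den_val hvdj).1, (num_den_val hd).1, nm_succ]
      · rw [(num_den_val hvdj).2, (num_den_val hd).2, dn_succ_eq]
  · -- case (ii)
    have hdne : d ≠ [] := by
      rintro rfl
      simp at hcase
      omega
    have hvc : Valid (d ++ [2]) := valid_concat_mk hd le_rfl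
    have hLvc : Lv (d ++ [2]) = Lv d := Lv_append_two d
    refine ⟨Lv d, d ++ [2], hvc, by simp, hLvc, ?_, Lv_lt_val hd, ?_, ?_⟩
    · cases hLL : LL d with
      | none => rw [Lv_none hLL]; exact mem_Xi.mpr (Or.inl rfl)
      | some e =>
        obtain ⟨hev, hene, hes⟩ := LL_spec hd hLL
        rw [Lv_some hLL]
        exact mem_Xi.mpr (Or.inr ⟨e, hev, by omega, rfl⟩)
    · intro w hw ⟨hw1, hw2⟩
      rcases mem_Xi.mp hw with rfl | ⟨g, hgv, hgs, rfl⟩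
      · exact absurd hw1 (not_lt.mpr (Lv_nonneg hd))
      · rcases eq_or_ne g [] with rfl | hgne
        · rw [val_nil] at hw2
          exact absurd hw2 (not_lt.mpr (val_le_one hd))
        · have hlo : Lv (d ++ [2]) < rrcfVal g := by rwa [hLvc]
          have hhi : rrcfVal g < Rv (d ++ [2]) := by rwa [Rv_concat]
          have := descent _ _ _ hvc (by simp) hgv hgne le_rfl hlo hhi
          rw [sum_concat] at this
          omega
    · have hN1 := N1 (d ++ [2]) hvc (by simp)
      rw [List.dropLast_concat] at hN1
      have hLp : Lpair (d ++ [2]) = Lpair d := by unfold Lpair; rw [LL_append_two]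
      rw [hLp] at hN1
      apply mediant_of_pairs hvc
      · rw [(num_den_val hd).1, hN1.1]
        cases hLL : LL d with
        | none =>
          rw [Lv_none hLL, Lpair_none hLL]
          norm_num
        | some e =>
          rw [Lv_some hLL, Lpair_some hLL, (num_den_val (LL_spec hd hLL).1).1]
      · rw [(num_den_val hd).2, hN1.2]
        cases hLL : LL d with
        | none =>
          rw [Lv_none hLL, Lpair_none hLL]
          norm_num
        | some e =>
          rw [Lv_some hLL, Lpair_some hLL, (num_den_val (LL_spec hd hLL).1).2]

end SBX

/-- if `x < y` are consecutive in `Ξ_n` and `x ⊕ y ∈ Θ_k`, then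
for every `m ≥ k`, `#{ξ ∈ Ξ_m : x < ξ ≤ x ⊕ y} = F_{m-k+1}`. -/
theorem ncard_upto_mediant
    (n : ℕ) (hn : 1 ≤ n) (x y : ℚ) (hxy : IsConsecutive (Xi n) x y)
    (k : ℕ) (hk : mediant x y ∈ Theta k) :
    ∀ m : ℕ, k ≤ m →
      ({ξ ∈ Xi m | x < ξ ∧ ξ ≤ mediant x y}).ncard = Nat.fib (m - k + 1) := by
  open SBX in
  intro m hm
  obtain ⟨hxXi, hyXi, hxy_lt, hbet⟩ := hxy
  have hx0 : (0 : ℚ) ≤ x := by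
    rcases mem_Xi.mp hxXi with rfl | ⟨b, hb, _, rfl⟩
    · exact le_rfl
    · exact (val_pos hb).le
  rcases mem_Xi.mp hyXi with rfl | ⟨d, hdv, hds, rfl⟩
  · exact absurd hxy_lt (not_lt.mpr hx0)
  obtain ⟨p, c, hcv, hcne, hLv, hpXi, hplt, hpbet, hmed⟩ := pred_exists n hn hdv hds
  have hxp : x = p := by
    rcases lt_trichotomy x p with h | h | h
    · exact absurd ⟨h, hplt⟩ (hbet p hpXi)
    · exact h
    · exact absurd ⟨h, hxy_lt⟩ (hpbet x hxXi)
  subst hxp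
  obtain ⟨hzIoo, b0, ⟨hb0v, hb0val⟩, hb0sum⟩ := hk
  have hb0c : b0 = c := val_inj hb0v hcv (by rw [← hb0val, hmed])
  have hsumc : c.sum = k + 1 := by rw [← hb0c, hb0sum]
  have hset : {ξ ∈ Xi m | x < ξ ∧ ξ ≤ mediant x (rrcfVal d)} =
      {rrcfVal c} ∪ Fset (c ++ [2]) (m + 1) := by
    rw [hmed]
    ext q
    simp only [Set.mem_setOf_eq, Set.mem_union, Set.mem_singleton_iff, Fset]
    constructor
    · rintro ⟨hqXi, hlo, hhi⟩
      rcases mem_Xi.mp hqXi with rfl | ⟨g, hgv, hgs, rfl⟩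
      · rw [← hLv] at hlo
        exact absurd hlo (not_lt.mpr (Lv_nonneg hcv))
      · rcases eq_or_ne g [] with rfl | hgne
        · exfalso
          rw [val_nil] at hhi
          have := val_lt_one hcv hcne
          linarith
        · rcases eq_or_ne (rrcfVal g) (rrcfVal c) with he | hne2
          · exact Or.inl he
          · refine Or.inr ⟨g, hgv, hgne, hgs, rfl, ?_, ?_⟩
            · rw [Lv_append_two, hLv]; exact hlo
            · rw [Rv_concat]; exact lt_of_le_of_ne hhi hne2
    · rintro (rfl | ⟨g, hgv, hgne, hgs, rfl, hlo, hhi⟩)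
      · refine ⟨mem_Xi.mpr (Or.inr ⟨c, hcv, by omega, rfl⟩), ?_, le_rfl⟩
        rw [← hLv]
        exact Lv_lt_val hcv
      · rw [Lv_append_two, hLv] at hlo
        rw [Rv_concat] at hhi
        exact ⟨mem_Xi.mpr (Or.inr ⟨g, hgv, hgs, rfl⟩), hlo, hhi.le⟩
  have hdisj : Disjoint ({rrcfVal c} : Set ℚ) (Fset (c ++ [2]) (m + 1)) := by
    rw [Set.disjoint_left]
    rintro q rfl ⟨g, _, _, _, hq, _, hhi⟩
    rw [Rv_concat] at hhi
    exact lt_irrefl _ hhi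
  have hvc2 : Valid (c ++ [2]) := valid_concat_mk hcv le_rfl
  have hcount := Fcount (m + 2) (m + 1) (c ++ [2]) hvc2 (by simp) (by rw [sum_concat]; omega)
  rw [hset, Set.ncard_union_eq hdisj (Set.finite_singleton _) (Fset_finite _ _),
      Set.ncard_singleton, hcount, sum_concat, hsumc]
  have e1 : m + 1 + 3 - (k + 1 + 2) = m - k + 1 := by omega
  rw [e1]
  have hp1 : 1 ≤ Nat.fib (m - k + 1) := Nat.fib_pos.mpr (by omega)
  omega
end

section
/- Let M(t) = lim_{m→∞} #{ ξ ∈ Ξ_m : ξ ≤ t } / #Ξ_m for t ∈ [0,1]. Then for any two consecutive elements x < y of Ξ_n (n ≥ 1), the limits M(x), M(y) and M(x ⊕ y) exist and satisfy M(x ⊕ y) = M(x) + (M(y) − M(x)) · τ², where τ² = (3−√5)/2 and x ⊕ y is the mediant of x and y. -/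
open Set Filter

def g1 (x : ℚ) : ℚ := x / (1 + x)
def g2 (x : ℚ) : ℚ := 1 / (2 - x)

lemma rrTail_gt_one (b : List ℕ) (h : ∀ bi ∈ b, 2 ≤ bi) (hne : b ≠ []) : 1 < rrTail b := by
  induction b with
  | nil => simp at hne
  | cons a t ih =>
    have ha : (2:ℚ) ≤ (a:ℚ) := by exact_mod_cast h a (by simp)
    rcases eq_or_ne t [] with rfl | htne
    · show 1 < (a:ℚ) - 1 / rrTail []
      show 1 < (a:ℚ) - 1 / 0
      rw [div_zero]
      linarith
    · have h1 := ih (fun bi hbi => h bi (by simp [hbi])) htne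
      have h2 : 0 < rrTail t := lt_trans one_pos h1
      have h3 : 1 / rrTail t < 1 := by rw [div_lt_one h2]; exact h1
      have h4 : 0 < 1 / rrTail t := by positivity
      show (a:ℚ) - 1 / rrTail t > 1
      linarith

lemma rrcfVal_mem_Ioo (b : List ℕ) (h : ∀ bi ∈ b, 2 ≤ bi) (hne : b ≠ []) :
    rrcfVal b ∈ Set.Ioo (0:ℚ) 1 := by
  have h1 := rrTail_gt_one b h hne
  have h2 : 0 < rrTail b := lt_trans one_pos h1
  have h3 : 1 / rrTail b < 1 := by rw [div_lt_one h2]; exact h1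
  have h4 : 0 < 1 / rrTail b := by positivity
  have h5 : rrcfVal b = 1 - 1/rrTail b := rfl
  constructor
  · rw [h5]; linarith
  · rw [h5]; linarith

lemma rrcfVal_nil : rrcfVal [] = 1 := by simp [rrcfVal, rrTail]

lemma sum_pos_of_valid {t : List ℕ} (h : ∀ bi ∈ t, 2 ≤ bi) (hne : t ≠ []) : 2 ≤ t.sum := by
  cases t with
  | nil => simp at hne
  | cons a s =>
    have := h a (by simp)
    simp only [List.sum_cons]
    omega

lemma mem_theta_iff {x : ℚ} {k : ℕ} :
    x ∈ Theta k ↔ ∃ b : List ℕ, (∀ bi ∈ b, 2 ≤ bi) ∧ x = rrcfVal b ∧ b.sum = k + 1 := by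
  constructor
  · rintro ⟨-, b, ⟨hb, rfl⟩, hs⟩; exact ⟨b, hb, rfl, hs⟩
  · rintro ⟨b, hb, rfl, hs⟩
    have hne : b ≠ [] := by rintro rfl; simp at hs
    exact ⟨rrcfVal_mem_Ioo b hb hne, b, ⟨hb, rfl⟩, hs⟩

lemma mem_Xi_iff {x : ℚ} {n : ℕ} :
    x ∈ Xi n ↔ x = 0 ∨ x = 1 ∨ ∃ k, 1 ≤ k ∧ k ≤ n ∧ x ∈ Theta k := by
  simp only [Xi, Set.mem_union, Set.mem_insert_iff, Set.mem_singleton_iff, Set.mem_iUnion,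
    Finset.mem_Icc, exists_prop, or_assoc]
  constructor
  · rintro (h | h | ⟨k, ⟨h1, h2⟩, h3⟩)
    exacts [Or.inl h, Or.inr (Or.inl h), Or.inr (Or.inr ⟨k, h1, h2, h3⟩)]
  · rintro (h | h | ⟨k, h1, h2, h3⟩)
    exacts [Or.inl h, Or.inr (Or.inl h), Or.inr (Or.inr ⟨k, ⟨h1, h2⟩, h3⟩)]

lemma theta_subset_Ioo {k : ℕ} : Theta k ⊆ Set.Ioo (0:ℚ) 1 := fun _ hx => hx.1

lemma xi_subset_Icc {n : ℕ} : Xi n ⊆ Set.Icc (0:ℚ) 1 := by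
  intro x hx
  rcases mem_Xi_iff.1 hx with rfl | rfl | ⟨k, -, -, hk⟩
  · exact ⟨le_refl 0, zero_le_one⟩
  · exact ⟨zero_le_one, le_refl 1⟩
  · exact ⟨(theta_subset_Ioo hk).1.le, (theta_subset_Ioo hk).2.le⟩

lemma zero_mem_Xi (n : ℕ) : (0:ℚ) ∈ Xi n := Or.inl (Or.inl rfl)
lemma one_mem_Xi (n : ℕ) : (1:ℚ) ∈ Xi n := Or.inl (Or.inr rfl)

lemma half_mem_theta_one : (1/2 : ℚ) ∈ Theta 1 := by
  rw [mem_theta_iff]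
  exact ⟨[2], by simp, by norm_num [rrcfVal, rrTail], by simp⟩

lemma half_mem_Xi {n : ℕ} (hn : 1 ≤ n) : (1/2 : ℚ) ∈ Xi n :=
  mem_Xi_iff.2 (Or.inr (Or.inr ⟨1, le_refl 1, hn, half_mem_theta_one⟩))

lemma g1_zero : g1 0 = 0 := by norm_num [g1]
lemma g1_one : g1 1 = 1/2 := by norm_num [g1]
lemma g2_zero : g2 0 = 1/2 := by norm_num [g2]
lemma g2_one : g2 1 = 1 := by norm_num [g2]

lemma g1_lt_g1 {x y : ℚ} (hx : -1 < x) (hy : -1 < y) : g1 x < g1 y ↔ x < y := by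
  unfold g1
  rw [div_lt_div_iff₀ (by linarith) (by linarith)]
  constructor <;> intro h <;> nlinarith

lemma g1_le_g1 {x y : ℚ} (hx : -1 < x) (hy : -1 < y) : g1 x ≤ g1 y ↔ x ≤ y := by
  rw [← not_lt, ← not_lt, g1_lt_g1 hy hx]

lemma g2_lt_g2 {x y : ℚ} (hx : x < 2) (hy : y < 2) : g2 x < g2 y ↔ x < y := by
  unfold g2
  rw [div_lt_div_iff₀ (by linarith) (by linarith)]
  constructor <;> intro h <;> nlinarith

lemma g2_le_g2 {x y : ℚ} (hx : x < 2) (hy : y < 2) : g2 x ≤ g2 y ↔ x ≤ y := by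
  rw [← not_lt, ← not_lt, g2_lt_g2 hy hx]

lemma rrcfVal_two_cons (t : List ℕ) (ht : ∀ bi ∈ t, 2 ≤ bi) :
    rrcfVal (2 :: t) = g1 (rrcfVal t) := by
  rcases eq_or_ne t [] with rfl | htne
  · norm_num [rrcfVal, rrTail, g1]
  · have h1 := rrTail_gt_one t ht htne
    have h2 : rrTail t ≠ 0 := by linarith
    have h3 : 1 / rrTail t < 1 := by rw [div_lt_one (by linarith)]; exact h1
    show 1 - 1/((2:ℕ) - 1/rrTail t) = (1 - 1/rrTail t) / (1 + (1 - 1/rrTail t))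
    push_cast
    have hA : (2:ℚ) - 1/rrTail t = 1 + (1 - 1/rrTail t) := by ring
    rw [hA]
    have h5 : (1:ℚ) + (1 - 1/rrTail t) ≠ 0 := by intro hc; nlinarith
    field_simp
    have h6 : rrTail t + (rrTail t - 1) ≠ 0 := by intro hc; linarith
    rw [eq_div_iff h6, sub_mul, div_mul_cancel₀ _ h6]
    ring

lemma rrcfVal_succ_cons (a : ℕ) (t : List ℕ) (ha : 2 ≤ a) (ht : ∀ bi ∈ t, 2 ≤ bi) :
    rrcfVal ((a+1) :: t) = g2 (rrcfVal (a :: t)) := by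
  have hv : ∀ bi ∈ (a :: t), 2 ≤ bi := by
    intro bi hbi; rcases List.mem_cons.1 hbi with rfl | h; exact ha; exact ht bi h
  have h1 := rrTail_gt_one (a :: t) hv (by simp)
  set r := rrTail (a :: t) with hr
  have hrt : rrTail ((a+1) :: t) = r + 1 := by
    show ((a+1:ℕ):ℚ) - 1/rrTail t = ((a:ℕ):ℚ) - 1/rrTail t + 1
    push_cast; ring
  show 1 - 1 / rrTail ((a+1)::t) = g2 (1 - 1/r)
  rw [hrt]
  unfold g2
  have hr0 : r ≠ 0 := by linarith
  have hr1 : r + 1 ≠ 0 := by linarith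
  have h2 : (2:ℚ) - (1 - 1/r) = (r+1)/r := by field_simp; ring
  rw [h2, one_div_div]
  have h3 : (1:ℚ) - 1/(r+1) = ((r+1) - 1)/(r+1) := by
    rw [sub_div, div_self hr1]
  rw [h3]
  ring_nf

lemma theta_first_digit {x : ℚ} {k : ℕ} (hx : x ∈ Theta k) :
    ∃ a t, 2 ≤ a ∧ (∀ bi ∈ t, 2 ≤ bi) ∧ x = rrcfVal (a :: t) ∧ (a :: t).sum = k + 1 := by
  obtain ⟨b, hb, rfl, hs⟩ := mem_theta_iff.1 hx
  cases b with
  | nil => exact absurd hs (by simp)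
  | cons a t => exact ⟨a, t, hb a (by simp), fun bi h => hb bi (by simp [h]), rfl, hs⟩

lemma xi_left {m : ℕ} (hm : 1 ≤ m) : Xi m ∩ Set.Iic (1/2 : ℚ) = g1 '' Xi (m - 2) := by
  ext x
  constructor
  · rintro ⟨hx, hle⟩
    rcases mem_Xi_iff.1 hx with rfl | rfl | ⟨k, hk1, hkm, hth⟩
    · exact ⟨0, zero_mem_Xi _, g1_zero⟩
    · exfalso; rw [Set.mem_Iic] at hle; norm_num at hle
    · obtain ⟨a, t, ha, ht, rfl, hs⟩ := theta_first_digit hth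
      rcases eq_or_lt_of_le ha with rfl | ha3
      · rcases eq_or_ne t [] with rfl | htne
        · exact ⟨1, one_mem_Xi _, by norm_num [rrcfVal, rrTail, g1]⟩
        · refine ⟨rrcfVal t, ?_, (rrcfVal_two_cons t ht).symm⟩
          have hst : 2 ≤ t.sum := sum_pos_of_valid ht htne
          have hsum : t.sum = (k - 2) + 1 := by simp only [List.sum_cons] at hs; omega
          have hth' : rrcfVal t ∈ Theta (k - 2) := mem_theta_iff.2 ⟨t, ht, rfl, hsum⟩
          refine mem_Xi_iff.2 (Or.inr (Or.inr ⟨k - 2, ?_, ?_, hth'⟩)) <;>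
            simp only [List.sum_cons] at hs <;> omega
      · exfalso
        obtain ⟨a', rfl⟩ : ∃ a', a = a' + 1 := ⟨a - 1, by omega⟩
        have ha' : 2 ≤ a' := by omega
        have ht' : ∀ bi ∈ (a' :: t), 2 ≤ bi := by
          intro bi hbi; rcases List.mem_cons.1 hbi with rfl | h; exacts [ha', ht bi h]
        have hu := rrcfVal_mem_Ioo (a' :: t) ht' (by simp)
        rw [rrcfVal_succ_cons a' t ha' ht, Set.mem_Iic] at hle
        have : g2 0 < g2 (rrcfVal (a' :: t)) :=
          (g2_lt_g2 (by norm_num) (by linarith [hu.2])).2 hu.1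
        rw [g2_zero] at this
        linarith
  · rintro ⟨x', hx', rfl⟩
    have hx'01 := xi_subset_Icc hx'
    have hg1le : g1 x' ∈ Set.Iic (1/2 : ℚ) := by
      rw [Set.mem_Iic, ← g1_one, g1_le_g1 (by linarith [hx'01.1]) (by norm_num)]
      exact hx'01.2
    refine ⟨?_, hg1le⟩
    rcases mem_Xi_iff.1 hx' with rfl | rfl | ⟨k, hk1, hkm, hth⟩
    · rw [g1_zero]; exact zero_mem_Xi _
    · rw [g1_one]; exact half_mem_Xi hm
    · obtain ⟨b, hb, rfl, hs⟩ := mem_theta_iff.1 hth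
      have hb2 : ∀ bi ∈ (2 :: b), 2 ≤ bi := by
        intro bi hbi; rcases List.mem_cons.1 hbi with rfl | h; exacts [le_refl 2, hb bi h]
      have hth2 : g1 (rrcfVal b) ∈ Theta (k + 2) :=
        mem_theta_iff.2 ⟨2 :: b, hb2, (rrcfVal_two_cons b hb).symm,
          by simp only [List.sum_cons]; omega⟩
      exact mem_Xi_iff.2 (Or.inr (Or.inr ⟨k + 2, by omega, by omega, hth2⟩))

lemma xi_right {m : ℕ} (hm : 1 ≤ m) : Xi m ∩ Set.Ici (1/2 : ℚ) = g2 '' Xi (m - 1) := by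
  ext x
  constructor
  · rintro ⟨hx, hge⟩
    rcases mem_Xi_iff.1 hx with rfl | rfl | ⟨k, hk1, hkm, hth⟩
    · exfalso; rw [Set.mem_Ici] at hge; norm_num at hge
    · exact ⟨1, one_mem_Xi _, g2_one⟩
    · obtain ⟨a, t, ha, ht, rfl, hs⟩ := theta_first_digit hth
      rcases eq_or_lt_of_le ha with rfl | ha3
      · rcases eq_or_ne t [] with rfl | htne
        · exact ⟨0, zero_mem_Xi _, by norm_num [rrcfVal, rrTail, g2]⟩
        · exfalso
          have hu := rrcfVal_mem_Ioo t ht htne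
          rw [rrcfVal_two_cons t ht, Set.mem_Ici] at hge
          have : g1 (rrcfVal t) < g1 1 := (g1_lt_g1 (by linarith [hu.1]) (by norm_num)).2 hu.2
          rw [g1_one] at this
          linarith
      · obtain ⟨a', rfl⟩ : ∃ a', a = a' + 1 := ⟨a - 1, by omega⟩
        have ha' : 2 ≤ a' := by omega
        refine ⟨rrcfVal (a' :: t), ?_, (rrcfVal_succ_cons a' t ha' ht).symm⟩
        have ht' : ∀ bi ∈ (a' :: t), 2 ≤ bi := by
          intro bi hbi; rcases List.mem_cons.1 hbi with rfl | h; exacts [ha', ht bi h]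
        have hsum : (a' :: t).sum = (k - 1) + 1 := by
          simp only [List.sum_cons] at hs ⊢; omega
        have hth' : rrcfVal (a' :: t) ∈ Theta (k - 1) := mem_theta_iff.2 ⟨_, ht', rfl, hsum⟩
        refine mem_Xi_iff.2 (Or.inr (Or.inr ⟨k - 1, ?_, ?_, hth'⟩)) <;>
          simp only [List.sum_cons] at hs <;> omega
  · rintro ⟨x', hx', rfl⟩
    have hx'01 := xi_subset_Icc hx'
    have hge : g2 x' ∈ Set.Ici (1/2 : ℚ) := by
      rw [Set.mem_Ici, ← g2_zero, g2_le_g2 (by norm_num) (by linarith [hx'01.2])]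
      exact hx'01.1
    refine ⟨?_, hge⟩
    rcases mem_Xi_iff.1 hx' with rfl | rfl | ⟨k, hk1, hkm, hth⟩
    · rw [g2_zero]; exact half_mem_Xi hm
    · rw [g2_one]; exact one_mem_Xi _
    · obtain ⟨a, t, ha, ht, rfl, hs⟩ := theta_first_digit hth
      have hb2 : ∀ bi ∈ ((a+1) :: t), 2 ≤ bi := by
        intro bi hbi; rcases List.mem_cons.1 hbi with rfl | h; exacts [by omega, ht bi h]
      have hth2 : g2 (rrcfVal (a :: t)) ∈ Theta (k + 1) :=
        mem_theta_iff.2 ⟨(a+1) :: t, hb2, (rrcfVal_succ_cons a t ha ht).symm,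
          by simp only [List.sum_cons] at hs ⊢; omega⟩
      exact mem_Xi_iff.2 (Or.inr (Or.inr ⟨k + 1, by omega, by omega, hth2⟩))

lemma g1_injOn : Set.InjOn g1 (Set.Icc (0:ℚ) 1) := by
  intro a ha b hb h
  by_contra hne
  rcases lt_or_gt_of_ne hne with hlt | hlt
  · exact absurd h (ne_of_lt ((g1_lt_g1 (by linarith [ha.1]) (by linarith [hb.1])).2 hlt))
  · exact absurd h.symm (ne_of_lt ((g1_lt_g1 (by linarith [hb.1]) (by linarith [ha.1])).2 hlt))

lemma g2_injOn : Set.InjOn g2 (Set.Icc (0:ℚ) 1) := by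
  intro a ha b hb h
  by_contra hne
  rcases lt_or_gt_of_ne hne with hlt | hlt
  · exact absurd h (ne_of_lt ((g2_lt_g2 (by linarith [ha.2]) (by linarith [hb.2])).2 hlt))
  · exact absurd h.symm (ne_of_lt ((g2_lt_g2 (by linarith [hb.2]) (by linarith [ha.2])).2 hlt))

lemma xi_zero : Xi 0 = {0, 1} := by
  have h : Finset.Icc 1 0 = (∅ : Finset ℕ) := rfl
  simp [Xi, h]

lemma xi_cover {m : ℕ} : Xi m = (Xi m ∩ Set.Iic (1/2:ℚ)) ∪ (Xi m ∩ Set.Ici (1/2:ℚ)) := by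
  ext z
  constructor
  · intro hz
    rcases le_total z (1/2 : ℚ) with h | h
    · exact Or.inl ⟨hz, h⟩
    · exact Or.inr ⟨hz, h⟩
  · rintro (⟨h, -⟩ | ⟨h, -⟩) <;> exact h

lemma xi_finite : ∀ m, (Xi m).Finite := by
  intro m
  induction m using Nat.strong_induction_on with
  | _ m ih =>
    match m with
    | 0 => rw [xi_zero]; exact (Set.finite_singleton 1).insert 0
    | (m+1) =>
      rw [xi_cover, xi_left (by omega), xi_right (by omega)]
      exact ((ih _ (by omega)).image g1).union ((ih _ (by omega)).image g2)

lemma xi_card_two_le (m : ℕ) : 2 ≤ (Xi m).ncard := by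
  have h : ({0, 1} : Set ℚ).ncard ≤ (Xi m).ncard :=
    Set.ncard_le_ncard (fun z hz => Or.inl hz) (xi_finite m)
  rwa [Set.ncard_pair (by norm_num : (0:ℚ) ≠ 1)] at h

lemma xi_card_rec (m : ℕ) (hm : 1 ≤ m) :
    (Xi m).ncard + 1 = (Xi (m-1)).ncard + (Xi (m-2)).ncard := by
  have hfin1 : (Xi m ∩ Set.Iic (1/2:ℚ)).Finite := (xi_finite m).inter_of_left _
  have hfin2 : (Xi m ∩ Set.Ici (1/2:ℚ)).Finite := (xi_finite m).inter_of_left _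
  have hint : (Xi m ∩ Set.Iic (1/2:ℚ)) ∩ (Xi m ∩ Set.Ici (1/2:ℚ)) = {1/2} := by
    ext z
    constructor
    · rintro ⟨⟨-, h1⟩, -, h2⟩
      exact le_antisymm h1 h2
    · rintro rfl
      exact ⟨⟨half_mem_Xi hm, Set.mem_Iic.2 le_rfl⟩, half_mem_Xi hm, Set.mem_Ici.2 le_rfl⟩
  have key := Set.ncard_union_add_ncard_inter _ _ hfin1 hfin2
  rw [← xi_cover, hint, Set.ncard_singleton] at key
  rw [key, xi_left hm, xi_right hm,
    Set.ncard_image_of_injOn (g1_injOn.mono xi_subset_Icc),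
    Set.ncard_image_of_injOn (g2_injOn.mono xi_subset_Icc)]
  omega

lemma xi_card_ge (m : ℕ) : m + 2 ≤ (Xi m).ncard := by
  induction m using Nat.strong_induction_on with
  | _ m ih =>
    match m with
    | 0 => exact xi_card_two_le 0
    | (m+1) =>
      have h := xi_card_rec (m+1) (by omega)
      have h1 := ih m (by omega)
      have h2 := xi_card_two_le (m+1-2)
      simp only [Nat.add_sub_cancel] at h
      omega

noncomputable def phR : ℝ := (1 + Real.sqrt 5)/2
noncomputable def psR : ℝ := (1 - Real.sqrt 5)/2
noncomputable def tauR : ℝ := (Real.sqrt 5 - 1)/2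

lemma sqrt5_sq : Real.sqrt 5 ^ 2 = 5 := Real.sq_sqrt (by norm_num)
lemma sqrt5_gt_two : 2 < Real.sqrt 5 := by
  nlinarith [sqrt5_sq, Real.sqrt_nonneg 5]
lemma sqrt5_lt_three : Real.sqrt 5 < 3 := by
  nlinarith [sqrt5_sq, Real.sqrt_nonneg 5]

lemma phR_gt_one : 1 < phR := by unfold phR; linarith [sqrt5_gt_two]
lemma phR_pos : 0 < phR := lt_trans one_pos phR_gt_one
lemma psR_neg : psR < 0 := by unfold psR; linarith [sqrt5_gt_two]
lemma psR_gt_negone : -1 < psR := by unfold psR; linarith [sqrt5_lt_three]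
lemma phR_sq : phR ^ 2 = phR + 1 := by unfold phR; nlinarith [sqrt5_sq]
lemma psR_sq : psR ^ 2 = psR + 1 := by unfold psR; nlinarith [sqrt5_sq]
lemma tau_phR : tauR * phR = 1 := by unfold tauR phR; nlinarith [sqrt5_sq]
lemma tauR_eq : tauR = 1 / phR := by
  rw [eq_div_iff (ne_of_gt phR_pos)]
  exact tau_phR

noncomputable def Fs (m : ℕ) : ℝ := (phR^(m+2) - psR^(m+2))/Real.sqrt 5 + 1

lemma Fs_rec (m : ℕ) : Fs (m+2) + 1 = Fs (m+1) + Fs m := by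
  have h1 : phR^(m+4) = phR^(m+3) + phR^(m+2) := by
    calc phR^(m+4) = phR^(m+2) * phR^2 := by ring
    _ = phR^(m+2) * (phR + 1) := by rw [phR_sq]
    _ = phR^(m+3) + phR^(m+2) := by ring
  have h2 : psR^(m+4) = psR^(m+3) + psR^(m+2) := by
    calc psR^(m+4) = psR^(m+2) * psR^2 := by ring
    _ = psR^(m+2) * (psR + 1) := by rw [psR_sq]
    _ = psR^(m+3) + psR^(m+2) := by ring
  show (phR^(m+2+2) - psR^(m+2+2))/Real.sqrt 5 + 1 + 1
      = (phR^(m+1+2) - psR^(m+1+2))/Real.sqrt 5 + 1 + ((phR^(m+2) - psR^(m+2))/Real.sqrt 5 + 1)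
  have e1 : m+2+2 = m+4 := by omega
  have e2 : m+1+2 = m+3 := by omega
  rw [e1, e2, h1, h2]
  ring

lemma xi_card_real : ∀ m, ((Xi m).ncard : ℝ) = Fs m := by
  have h0 : ((Xi 0).ncard : ℝ) = Fs 0 := by
    rw [xi_zero, Set.ncard_pair (by norm_num : (0:ℚ) ≠ 1)]
    unfold Fs phR psR
    have h5 : Real.sqrt 5 ≠ 0 := by positivity
    field_simp
    nlinarith [sqrt5_sq]
  have h1 : ((Xi 1).ncard : ℝ) = Fs 1 := by
    have hr := xi_card_rec 1 (by omega)
    have hc0 : (Xi 0).ncard = 2 := by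
      rw [xi_zero]; exact Set.ncard_pair (by norm_num)
    have hc1 : (Xi 1).ncard = 3 := by
      have e : (Xi (1-1)).ncard = 2 := hc0
      have e2 : (Xi (1-2)).ncard = 2 := hc0
      omega
    rw [hc1]
    unfold Fs phR psR
    have h5 : Real.sqrt 5 ≠ 0 := by positivity
    field_simp
    linear_combination (-1/4 * Real.sqrt 5) * sqrt5_sq
  intro m
  induction m using Nat.strong_induction_on with
  | _ m ih =>
    match m with
    | 0 => exact h0
    | 1 => exact h1
    | (m+2) =>
      have hr := xi_card_rec (m+2) (by omega)
      have e1 : m + 2 - 1 = m + 1 := by omega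
      have e2 : m + 2 - 2 = m := by omega
      rw [e1, e2] at hr
      have ih1 := ih (m+1) (by omega)
      have ih0 := ih m (by omega)
      have hcast : ((Xi (m+2)).ncard : ℝ) + 1
          = ((Xi (m+1)).ncard : ℝ) + ((Xi m).ncard : ℝ) := by
        exact_mod_cast congrArg (fun n : ℕ => (n : ℝ)) hr
      rw [ih1, ih0] at hcast
      linarith [Fs_rec m]

noncomputable def Gs (m : ℕ) : ℝ := (phR^2 - psR^2 * (psR/phR)^m)/Real.sqrt 5 + (1/phR)^m

lemma Fs_eq_Gs (m : ℕ) : Fs m = Gs m * phR^m := by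
  have hφ : phR ^ m ≠ 0 := pow_ne_zero m (ne_of_gt phR_pos)
  have h1 : (psR/phR)^m * phR^m = psR^m := by
    rw [div_pow, div_mul_cancel₀ _ hφ]
  have h2 : (1/phR : ℝ)^m * phR^m = 1 := by
    rw [div_pow, one_pow, div_mul_cancel₀ _ hφ]
  calc Fs m = (phR^(m+2) - psR^(m+2))/Real.sqrt 5 + 1 := rfl
  _ = (phR^2 * phR^m - psR^2 * ((psR/phR)^m * phR^m))/Real.sqrt 5 + (1/phR)^m * phR^m := by
      rw [h1, h2]; ring_nf
  _ = Gs m * phR^m := by unfold Gs; ring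

lemma Gs_tendsto : Tendsto Gs atTop (nhds (phR^2/Real.sqrt 5)) := by
  have h1 : |psR/phR| < 1 := by
    rw [abs_div, abs_of_pos phR_pos, div_lt_one phR_pos, abs_lt]
    constructor <;> [linarith [psR_gt_negone, phR_gt_one]; linarith [psR_neg, phR_pos]]
  have h2 : |1/phR| < 1 := by
    rw [abs_div, abs_of_pos phR_pos, div_lt_one phR_pos, abs_one]
    exact phR_gt_one
  have hA : Tendsto (fun m : ℕ => (phR^2 - psR^2 * (psR/phR)^m)/Real.sqrt 5 + (1/phR)^m)
      atTop (nhds ((phR^2 - psR^2 * 0)/Real.sqrt 5 + 0)) :=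
    (((tendsto_const_nhds.sub (tendsto_const_nhds.mul
      (tendsto_pow_atTop_nhds_zero_of_abs_lt_one h1))).div_const _).add
      (tendsto_pow_atTop_nhds_zero_of_abs_lt_one h2))
  have he : (phR^2 - psR^2 * 0)/Real.sqrt 5 + 0 = phR^2/Real.sqrt 5 := by ring
  rw [he] at hA
  unfold Gs
  exact hA

lemma Gs_lim_pos : (0:ℝ) < phR^2/Real.sqrt 5 := by
  have := phR_pos
  positivity

lemma xi_ratio (k : ℕ) :
    Tendsto (fun m => ((Xi m).ncard : ℝ) / ((Xi (m+k)).ncard : ℝ)) atTop (nhds (tauR^k)) := by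
  have hL := Gs_lim_pos
  have hGk : Tendsto (fun m => Gs (m+k)) atTop (nhds (phR^2/Real.sqrt 5)) :=
    Gs_tendsto.comp (tendsto_add_atTop_nat k)
  have hdiv : Tendsto (fun m => Gs m / Gs (m+k)) atTop (nhds 1) := by
    have h := Gs_tendsto.div hGk (ne_of_gt hL)
    rwa [div_self (ne_of_gt hL)] at h
  have key : ∀ m, ((Xi m).ncard : ℝ) / ((Xi (m+k)).ncard : ℝ) = (Gs m / Gs (m+k)) * tauR^k := by
    intro m
    have hm : phR^m ≠ 0 := pow_ne_zero _ (ne_of_gt phR_pos)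
    have h3 : phR ^ m / phR ^ (m + k) = tauR ^ k := by
      rw [pow_add, ← div_div, div_self hm, tauR_eq, div_pow, one_pow]
    rw [xi_card_real, xi_card_real, Fs_eq_Gs, Fs_eq_Gs, ← h3, div_mul_div_comm]
  have h4 := hdiv.mul_const (tauR^k)
  rw [one_mul] at h4
  exact h4.congr (fun m => (key m).symm)

lemma xi_ratio_sub (j : ℕ) :
    Tendsto (fun m => ((Xi (m - j)).ncard : ℝ) / ((Xi m).ncard : ℝ)) atTop (nhds (tauR^j)) := by
  have h := (xi_ratio j).comp (tendsto_sub_atTop_nat j)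
  apply h.congr'
  filter_upwards [eventually_ge_atTop j] with m hm
  simp only [Function.comp_apply]
  rw [Nat.sub_add_cancel hm]

lemma xi_tendsto_atTop : Tendsto (fun m => ((Xi m).ncard : ℝ)) atTop atTop := by
  apply tendsto_atTop_mono (f := fun m : ℕ => (m:ℝ))
  · intro m
    have := xi_card_ge m
    exact_mod_cast Nat.le_of_lt (by omega)
  · exact tendsto_natCast_atTop_atTop

lemma const_div_xi (c : ℝ) : Tendsto (fun m => c / ((Xi m).ncard : ℝ)) atTop (nhds 0) :=
  Tendsto.div_atTop tendsto_const_nhds xi_tendsto_atTop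

lemma count_g1 {m : ℕ} (hm : 1 ≤ m) {t : ℚ} (ht : t ∈ Set.Icc (0:ℚ) 1) :
    {ξ ∈ Xi m | ξ ≤ g1 t} = g1 '' {ξ ∈ Xi (m-2) | ξ ≤ t} := by
  have hglet : g1 t ≤ 1/2 := by
    rw [← g1_one, g1_le_g1 (by linarith [ht.1]) (by norm_num)]; exact ht.2
  ext z
  constructor
  · rintro ⟨hz, hle⟩
    have hz2 : z ∈ Xi m ∩ Set.Iic (1/2:ℚ) := ⟨hz, le_trans hle hglet⟩
    rw [xi_left hm] at hz2
    obtain ⟨z', hz', rfl⟩ := hz2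
    have h01 := xi_subset_Icc hz'
    refine ⟨z', ⟨hz', ?_⟩, rfl⟩
    rw [← g1_le_g1 (by linarith [h01.1]) (by linarith [ht.1])]
    exact hle
  · rintro ⟨z', ⟨hz', hle⟩, rfl⟩
    have h01 := xi_subset_Icc hz'
    have hmem : g1 z' ∈ g1 '' Xi (m-2) := ⟨z', hz', rfl⟩
    rw [← xi_left hm] at hmem
    exact ⟨hmem.1, by rw [g1_le_g1 (by linarith [h01.1]) (by linarith [ht.1])]; exact hle⟩

lemma count_g2 {m : ℕ} (hm : 1 ≤ m) {t : ℚ} (ht : t ∈ Set.Icc (0:ℚ) 1) :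
    ({ξ ∈ Xi m | ξ ≤ g2 t}).ncard + 1
      = (Xi (m-2)).ncard + ({ξ ∈ Xi (m-1) | ξ ≤ t}).ncard := by
  have hget : (1/2 : ℚ) ≤ g2 t := by
    rw [← g2_zero, g2_le_g2 (by norm_num) (by linarith [ht.2])]; exact ht.1
  have hA : {ξ ∈ Xi m | ξ ≤ 1/2} = Xi m ∩ Set.Iic (1/2:ℚ) := rfl
  have hB : {ξ ∈ Xi m | 1/2 ≤ ξ ∧ ξ ≤ g2 t} = g2 '' {ξ ∈ Xi (m-1) | ξ ≤ t} := by
    ext z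
    constructor
    · rintro ⟨hz, hge, hle⟩
      have hz2 : z ∈ Xi m ∩ Set.Ici (1/2:ℚ) := ⟨hz, hge⟩
      rw [xi_right hm] at hz2
      obtain ⟨z', hz', rfl⟩ := hz2
      have h01 := xi_subset_Icc hz'
      refine ⟨z', ⟨hz', ?_⟩, rfl⟩
      rw [← g2_le_g2 (by linarith [h01.2]) (by linarith [ht.2])]
      exact hle
    · rintro ⟨z', ⟨hz', hle⟩, rfl⟩
      have h01 := xi_subset_Icc hz'
      have hmem : g2 z' ∈ g2 '' Xi (m-1) := ⟨z', hz', rfl⟩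
      rw [← xi_right hm] at hmem
      refine ⟨hmem.1, hmem.2, ?_⟩
      rw [g2_le_g2 (by linarith [h01.2]) (by linarith [ht.2])]
      exact hle
  have hsplit : {ξ ∈ Xi m | ξ ≤ g2 t}
      = {ξ ∈ Xi m | ξ ≤ 1/2} ∪ {ξ ∈ Xi m | 1/2 ≤ ξ ∧ ξ ≤ g2 t} := by
    ext z
    constructor
    · rintro ⟨hz, hle⟩
      rcases le_total z (1/2 : ℚ) with h | h
      · exact Or.inl ⟨hz, h⟩
      · exact Or.inr ⟨hz, h, hle⟩
    · rintro (⟨hz, h⟩ | ⟨hz, -, h⟩)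
      · exact ⟨hz, le_trans h hget⟩
      · exact ⟨hz, h⟩
  have hinter : {ξ ∈ Xi m | ξ ≤ 1/2} ∩ {ξ ∈ Xi m | 1/2 ≤ ξ ∧ ξ ≤ g2 t} = {(1/2 : ℚ)} := by
    ext z
    constructor
    · rintro ⟨⟨-, h1⟩, -, h2, -⟩
      exact le_antisymm h1 h2
    · rintro rfl
      exact ⟨⟨half_mem_Xi hm, le_rfl⟩, half_mem_Xi hm, le_rfl, hget⟩
  have hfA : ({ξ ∈ Xi m | ξ ≤ 1/2}).Finite :=
    (xi_finite m).subset (fun z hz => hz.1)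
  have hfB : ({ξ ∈ Xi m | 1/2 ≤ ξ ∧ ξ ≤ g2 t}).Finite :=
    (xi_finite m).subset (fun z hz => hz.1)
  have key := Set.ncard_union_add_ncard_inter _ _ hfA hfB
  rw [← hsplit, hinter, Set.ncard_singleton] at key
  rw [key, hA, xi_left hm, hB,
    Set.ncard_image_of_injOn (g1_injOn.mono xi_subset_Icc),
    Set.ncard_image_of_injOn (g2_injOn.mono (fun z hz => xi_subset_Icc hz.1))]

def TendsToM (t : ℚ) (M : ℝ) : Prop :=
  Tendsto (fun m : ℕ => (({ξ ∈ Xi m | ξ ≤ t}).ncard : ℝ) / ((Xi m).ncard : ℝ)) atTop (nhds M)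

lemma xi_card_ne_zero (m : ℕ) : ((Xi m).ncard : ℝ) ≠ 0 := by
  have := xi_card_two_le m
  positivity

lemma TendsToM_g1 {t : ℚ} {M : ℝ} (ht : t ∈ Set.Icc (0:ℚ) 1) (h : TendsToM t M) :
    TendsToM (g1 t) (tauR^2 * M) := by
  unfold TendsToM at *
  have h2 : Tendsto (fun m : ℕ =>
      (({ξ ∈ Xi (m-2) | ξ ≤ t}).ncard : ℝ) / ((Xi (m-2)).ncard : ℝ)
        * (((Xi (m-2)).ncard : ℝ)/((Xi m).ncard : ℝ))) atTop (nhds (M * tauR^2)) :=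
    (h.comp (tendsto_sub_atTop_nat 2)).mul (xi_ratio_sub 2)
  rw [mul_comm] at h2
  apply h2.congr'
  filter_upwards [eventually_ge_atTop 1] with m hm
  have hcount := count_g1 hm ht
  have hcard : ({ξ ∈ Xi m | ξ ≤ g1 t}).ncard = ({ξ ∈ Xi (m-2) | ξ ≤ t}).ncard := by
    rw [hcount, Set.ncard_image_of_injOn (g1_injOn.mono (fun z hz => xi_subset_Icc hz.1))]
  rw [div_mul_div_comm, mul_comm (({ξ ∈ Xi (m-2) | ξ ≤ t}).ncard : ℝ),
    mul_div_mul_left _ _ (xi_card_ne_zero (m-2)), hcard]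

lemma TendsToM_g2 {t : ℚ} {M : ℝ} (ht : t ∈ Set.Icc (0:ℚ) 1) (h : TendsToM t M) :
    TendsToM (g2 t) (tauR^2 + tauR * M) := by
  unfold TendsToM at *
  have h2 : Tendsto (fun m : ℕ =>
      (((Xi (m-2)).ncard : ℝ)/((Xi m).ncard : ℝ)) - 1/((Xi m).ncard : ℝ)
      + (({ξ ∈ Xi (m-1) | ξ ≤ t}).ncard : ℝ) / ((Xi (m-1)).ncard : ℝ)
        * (((Xi (m-1)).ncard : ℝ)/((Xi m).ncard : ℝ)))
      atTop (nhds (tauR^2 - 0 + M * tauR^1)) :=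
    ((xi_ratio_sub 2).sub (const_div_xi 1)).add
      ((h.comp (tendsto_sub_atTop_nat 1)).mul (xi_ratio_sub 1))
  have heq : tauR^2 - 0 + M * tauR^1 = tauR^2 + tauR * M := by ring
  rw [heq] at h2
  apply h2.congr'
  filter_upwards [eventually_ge_atTop 1] with m hm
  have hcount := count_g2 hm ht
  have hc : (({ξ ∈ Xi m | ξ ≤ g2 t}).ncard : ℝ)
      = ((Xi (m-2)).ncard : ℝ) - 1 + (({ξ ∈ Xi (m-1) | ξ ≤ t}).ncard : ℝ) := by
    have := congrArg (fun n : ℕ => (n : ℝ)) hcount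
    push_cast at this
    linarith
  rw [hc]
  have hmul : (({ξ ∈ Xi (m-1) | ξ ≤ t}).ncard : ℝ) / ((Xi (m-1)).ncard : ℝ)
        * (((Xi (m-1)).ncard : ℝ)/((Xi m).ncard : ℝ))
      = (({ξ ∈ Xi (m-1) | ξ ≤ t}).ncard : ℝ) / ((Xi m).ncard : ℝ) := by
    rw [div_mul_div_comm, mul_comm (({ξ ∈ Xi (m-1) | ξ ≤ t}).ncard : ℝ),
      mul_div_mul_left _ _ (xi_card_ne_zero (m-1))]
  rw [hmul]
  ring

lemma num_rat_eq (x : ℚ) : (x.num : ℚ) = x * x.den := by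
  have hd : ((x.den:ℚ)) ≠ 0 := by
    have := x.den_pos
    positivity
  have h := Rat.num_div_den x
  rwa [div_eq_iff hd] at h

lemma num_le_den {x : ℚ} (h1 : x ≤ 1) : x.num ≤ (x.den : ℤ) := by
  have hd : (0:ℚ) < (x.den : ℚ) := by exact_mod_cast x.den_pos
  have : (x.num : ℚ) ≤ (x.den : ℚ) := by
    rw [num_rat_eq]
    nlinarith
  exact_mod_cast this

lemma isCoprime_num_den (x : ℚ) : IsCoprime x.num (x.den : ℤ) := by
  rw [Int.isCoprime_iff_gcd_eq_one]
  exact x.reduced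

lemma g1_num_den {x : ℚ} (h0 : 0 ≤ x) (h1 : x ≤ 1) :
    (g1 x).num = x.num ∧ ((g1 x).den : ℤ) = x.num + x.den := by
  have hnum : (0:ℤ) ≤ x.num := Rat.num_nonneg.2 h0
  have hdenpos : (0:ℤ) < x.den := by exact_mod_cast x.den_pos
  have hb : (0:ℤ) < x.num + x.den := by omega
  have hcop : Nat.Coprime x.num.natAbs (x.num + (x.den:ℤ)).natAbs := by
    have h := (isCoprime_num_den x).add_mul_left_right 1
    rw [mul_one] at h
    have h2 : IsCoprime x.num (x.num + (x.den:ℤ)) := by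
      rwa [add_comm (x.den:ℤ) x.num] at h
    exact Int.isCoprime_iff_gcd_eq_one.1 h2
  have hx : g1 x = ((x.num : ℤ) : ℚ) / (((x.num + x.den : ℤ)) : ℚ) := by
    have hd : ((x.den : ℚ)) ≠ 0 := by positivity
    have h1x : (1:ℚ) + x ≠ 0 := by linarith
    unfold g1
    rw [div_eq_div_iff h1x (by exact_mod_cast ne_of_gt hb)]
    push_cast
    linear_combination (-1 : ℚ) * num_rat_eq x
  constructor
  · rw [hx]; exact Rat.num_div_eq_of_coprime hb hcop
  · rw [hx]; exact Rat.den_div_eq_of_coprime hb hcop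

lemma g2_num_den {x : ℚ} (h0 : 0 ≤ x) (h1 : x ≤ 1) :
    (g2 x).num = (x.den : ℤ) ∧ ((g2 x).den : ℤ) = 2 * x.den - x.num := by
  have hnum : (0:ℤ) ≤ x.num := Rat.num_nonneg.2 h0
  have hnd : x.num ≤ (x.den : ℤ) := num_le_den h1
  have hdenpos : (0:ℤ) < x.den := by exact_mod_cast x.den_pos
  have hb : (0:ℤ) < 2 * x.den - x.num := by omega
  have hcop : Nat.Coprime (x.den:ℤ).natAbs (2 * (x.den:ℤ) - x.num).natAbs := by
    have h := ((isCoprime_num_den x).symm.neg_right).add_mul_left_right 2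
    have h2 : IsCoprime (x.den : ℤ) (2 * x.den - x.num) := by
      have e : -x.num + (x.den:ℤ) * 2 = 2 * x.den - x.num := by ring
      rwa [e] at h
    exact Int.isCoprime_iff_gcd_eq_one.1 h2
  have hx : g2 x = (((x.den : ℤ)) : ℚ) / (((2 * x.den - x.num : ℤ)) : ℚ) := by
    have h2x : (2:ℚ) - x ≠ 0 := by linarith
    unfold g2
    rw [div_eq_div_iff h2x (by exact_mod_cast ne_of_gt hb)]
    push_cast
    linear_combination (-1 : ℚ) * num_rat_eq x
  constructor
  · rw [hx]; exact Rat.num_div_eq_of_coprime hb hcop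
  · rw [hx]; exact Rat.den_div_eq_of_coprime hb hcop

lemma g1_div {A B : ℚ} (hB : 0 < B) : g1 (A/B) = A/(B+A) := by
  unfold g1
  have h1 : 1 + A/B = (B+A)/B := by
    rw [eq_div_iff (ne_of_gt hB), add_mul, one_mul, div_mul_cancel₀ _ (ne_of_gt hB)]
  rw [h1, div_div_eq_mul_div, div_mul_cancel₀ _ (ne_of_gt hB)]

lemma g2_div {A B : ℚ} (hB : 0 < B) : g2 (A/B) = B/(2*B - A) := by
  unfold g2
  have h1 : 2 - A/B = (2*B-A)/B := by
    rw [eq_div_iff (ne_of_gt hB), sub_mul, div_mul_cancel₀ _ (ne_of_gt hB)]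
  rw [h1, one_div_div]

lemma mediant_eq (x y : ℚ) :
    mediant x y = ((x.num:ℚ) + (y.num:ℚ)) / ((x.den:ℚ) + (y.den:ℚ)) := by
  unfold mediant
  push_cast
  rfl

lemma mediant_mem_Icc {x y : ℚ} (hx : x ∈ Set.Icc (0:ℚ) 1) (hy : y ∈ Set.Icc (0:ℚ) 1) :
    mediant x y ∈ Set.Icc (0:ℚ) 1 := by
  have hxn : (0:ℚ) ≤ (x.num:ℚ) := by exact_mod_cast Rat.num_nonneg.2 hx.1
  have hyn : (0:ℚ) ≤ (y.num:ℚ) := by exact_mod_cast Rat.num_nonneg.2 hy.1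
  have hxd : (0:ℚ) < (x.den:ℚ) := by exact_mod_cast x.den_pos
  have hyd : (0:ℚ) < (y.den:ℚ) := by exact_mod_cast y.den_pos
  have hx1 : (x.num:ℚ) ≤ (x.den:ℚ) := by exact_mod_cast num_le_den hx.2
  have hy1 : (y.num:ℚ) ≤ (y.den:ℚ) := by exact_mod_cast num_le_den hy.2
  rw [mediant_eq]
  constructor
  · positivity
  · rw [div_le_one (by linarith)]
    linarith

lemma mediant_g1 {x y : ℚ} (hx : x ∈ Set.Icc (0:ℚ) 1) (hy : y ∈ Set.Icc (0:ℚ) 1) :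
    mediant (g1 x) (g1 y) = g1 (mediant x y) := by
  obtain ⟨hn1, hd1⟩ := g1_num_den hx.1 hx.2
  obtain ⟨hn2, hd2⟩ := g1_num_den hy.1 hy.2
  have hxn : (0:ℚ) ≤ (x.num:ℚ) := by exact_mod_cast Rat.num_nonneg.2 hx.1
  have hyn : (0:ℚ) ≤ (y.num:ℚ) := by exact_mod_cast Rat.num_nonneg.2 hy.1
  have hxd : (0:ℚ) < (x.den:ℚ) := by exact_mod_cast x.den_pos
  have hyd : (0:ℚ) < (y.den:ℚ) := by exact_mod_cast y.den_pos
  have hd1' : ((g1 x).den : ℚ) = (x.num:ℚ) + (x.den:ℚ) := by exact_mod_cast hd1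
  have hd2' : ((g1 y).den : ℚ) = (y.num:ℚ) + (y.den:ℚ) := by exact_mod_cast hd2
  rw [mediant_eq, mediant_eq, hn1, hn2, hd1', hd2', g1_div (by linarith)]
  congr 1
  ring

lemma mediant_g2 {x y : ℚ} (hx : x ∈ Set.Icc (0:ℚ) 1) (hy : y ∈ Set.Icc (0:ℚ) 1) :
    mediant (g2 x) (g2 y) = g2 (mediant x y) := by
  obtain ⟨hn1, hd1⟩ := g2_num_den hx.1 hx.2
  obtain ⟨hn2, hd2⟩ := g2_num_den hy.1 hy.2
  have hxn : (0:ℚ) ≤ (x.num:ℚ) := by exact_mod_cast Rat.num_nonneg.2 hx.1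
  have hyn : (0:ℚ) ≤ (y.num:ℚ) := by exact_mod_cast Rat.num_nonneg.2 hy.1
  have hxd : (0:ℚ) < (x.den:ℚ) := by exact_mod_cast x.den_pos
  have hyd : (0:ℚ) < (y.den:ℚ) := by exact_mod_cast y.den_pos
  have hx1 : (x.num:ℚ) ≤ (x.den:ℚ) := by exact_mod_cast num_le_den hx.2
  have hy1 : (y.num:ℚ) ≤ (y.den:ℚ) := by exact_mod_cast num_le_den hy.2
  have hd1' : ((g2 x).den : ℚ) = 2 * (x.den:ℚ) - (x.num:ℚ) := by exact_mod_cast hd1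
  have hd2' : ((g2 y).den : ℚ) = 2 * (y.den:ℚ) - (y.num:ℚ) := by exact_mod_cast hd2
  have hn1' : ((g2 x).num : ℚ) = (x.den:ℚ) := by exact_mod_cast hn1
  have hn2' : ((g2 y).num : ℚ) = (y.den:ℚ) := by exact_mod_cast hn2
  rw [mediant_eq, mediant_eq, hn1', hn2', hd1', hd2', g2_div (by linarith)]
  congr 1
  ring

lemma consecutive_g1 {n : ℕ} (hn : 1 ≤ n) {x y : ℚ} (h : IsConsecutive (Xi n) x y)
    (hy : y ≤ 1/2) :
    ∃ x' y', x = g1 x' ∧ y = g1 y' ∧ IsConsecutive (Xi (n-2)) x' y' := by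
  obtain ⟨hxm, hym, hlt, hmid⟩ := h
  have hx2 : x ∈ Xi n ∩ Set.Iic (1/2:ℚ) := ⟨hxm, le_trans hlt.le hy⟩
  have hy2 : y ∈ Xi n ∩ Set.Iic (1/2:ℚ) := ⟨hym, hy⟩
  rw [xi_left hn] at hx2 hy2
  obtain ⟨x', hx', rfl⟩ := hx2
  obtain ⟨y', hy', rfl⟩ := hy2
  have hx01 := xi_subset_Icc hx'
  have hy01 := xi_subset_Icc hy'
  refine ⟨x', y', rfl, rfl, hx', hy',
    (g1_lt_g1 (by linarith [hx01.1]) (by linarith [hy01.1])).1 hlt, ?_⟩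
  rintro z hz ⟨h1, h2⟩
  have hz01 := xi_subset_Icc hz
  have hzm : g1 z ∈ Xi n := by
    have hmem : g1 z ∈ g1 '' Xi (n-2) := ⟨z, hz, rfl⟩
    rw [← xi_left hn] at hmem
    exact hmem.1
  exact hmid (g1 z) hzm
    ⟨(g1_lt_g1 (by linarith [hx01.1]) (by linarith [hz01.1])).2 h1,
     (g1_lt_g1 (by linarith [hz01.1]) (by linarith [hy01.1])).2 h2⟩

lemma consecutive_g2 {n : ℕ} (hn : 1 ≤ n) {x y : ℚ} (h : IsConsecutive (Xi n) x y)
    (hx : 1/2 ≤ x) :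
    ∃ x' y', x = g2 x' ∧ y = g2 y' ∧ IsConsecutive (Xi (n-1)) x' y' := by
  obtain ⟨hxm, hym, hlt, hmid⟩ := h
  have hx2 : x ∈ Xi n ∩ Set.Ici (1/2:ℚ) := ⟨hxm, hx⟩
  have hy2 : y ∈ Xi n ∩ Set.Ici (1/2:ℚ) := ⟨hym, le_trans hx hlt.le⟩
  rw [xi_right hn] at hx2 hy2
  obtain ⟨x', hx', rfl⟩ := hx2
  obtain ⟨y', hy', rfl⟩ := hy2
  have hx01 := xi_subset_Icc hx'
  have hy01 := xi_subset_Icc hy'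
  refine ⟨x', y', rfl, rfl, hx', hy',
    (g2_lt_g2 (by linarith [hx01.2]) (by linarith [hy01.2])).1 hlt, ?_⟩
  rintro z hz ⟨h1, h2⟩
  have hz01 := xi_subset_Icc hz
  have hzm : g2 z ∈ Xi n := by
    have hmem : g2 z ∈ g2 '' Xi (n-1) := ⟨z, hz, rfl⟩
    rw [← xi_right hn] at hmem
    exact hmem.1
  exact hmid (g2 z) hzm
    ⟨(g2_lt_g2 (by linarith [hx01.2]) (by linarith [hz01.2])).2 h1,
     (g2_lt_g2 (by linarith [hz01.2]) (by linarith [hy01.2])).2 h2⟩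

lemma tauR_sq : tauR^2 = (3 - Real.sqrt 5)/2 := by
  unfold tauR
  linear_combination sqrt5_sq / 4

lemma TendsToM_zero : TendsToM 0 0 := by
  unfold TendsToM
  have hset : ∀ m : ℕ, {ξ ∈ Xi m | ξ ≤ 0} = {(0:ℚ)} := by
    intro m
    ext z
    constructor
    · rintro ⟨hz, hle⟩
      exact le_antisymm hle (xi_subset_Icc hz).1
    · rintro rfl
      exact ⟨zero_mem_Xi m, le_rfl⟩
  exact (const_div_xi 1).congr
    (fun m => by rw [hset m, Set.ncard_singleton, Nat.cast_one])

lemma TendsToM_one : TendsToM 1 1 := by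
  unfold TendsToM
  have hset : ∀ m : ℕ, {ξ ∈ Xi m | ξ ≤ 1} = Xi m := by
    intro m
    ext z
    exact ⟨fun h => h.1, fun h => ⟨h, (xi_subset_Icc h).2⟩⟩
  exact tendsto_const_nhds.congr
    (fun m => by rw [hset m, div_self (xi_card_ne_zero m)])

lemma mediant_zero_one : mediant 0 1 = 1/2 := by
  have h0n : (0:ℚ).num = 0 := rfl
  have h0d : (0:ℚ).den = 1 := rfl
  have h1n : (1:ℚ).num = 1 := rfl
  have h1d : (1:ℚ).den = 1 := rfl
  rw [mediant_eq, h0n, h0d, h1n, h1d]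
  norm_num

lemma main_ind : ∀ n : ℕ, ∀ x y : ℚ, IsConsecutive (Xi n) x y →
    ∃ Mx My Mm : ℝ, TendsToM x Mx ∧ TendsToM y My ∧ TendsToM (mediant x y) Mm ∧
      Mm = Mx + (My - Mx) * ((3 - Real.sqrt 5)/2) := by
  intro n
  induction n using Nat.strong_induction_on with
  | _ n ih =>
    intro x y hxy
    rcases Nat.eq_zero_or_pos n with rfl | hn
    · -- base case : Xi 0 = {0, 1}
      obtain ⟨hxm, hym, hlt, -⟩ := hxy
      rw [xi_zero] at hxm hym
      have hx0 : x = 0 := by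
        rcases hxm with rfl | rfl
        · rfl
        · rcases hym with rfl | rfl <;> exact absurd hlt (by norm_num)
      subst hx0
      have hy1 : y = 1 := by
        rcases hym with rfl | rfl
        · exact absurd hlt (by norm_num)
        · rfl
      subst hy1
      refine ⟨0, 1, tauR^2, TendsToM_zero, TendsToM_one, ?_, by rw [tauR_sq]; ring⟩
      have h12 : mediant 0 1 = g2 0 := by rw [mediant_zero_one, g2_zero]
      rw [h12]
      have h := TendsToM_g2 (by constructor <;> norm_num) TendsToM_zero
      rwa [mul_zero, add_zero] at h
    · -- inductive step
      have h12 := hxy.2.2.2 (1/2 : ℚ) (half_mem_Xi hn)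
      push_neg at h12
      by_cases hy : y ≤ 1/2
      · obtain ⟨x', y', rfl, rfl, hcons⟩ := consecutive_g1 hn hxy hy
        obtain ⟨Mx', My', Mm', h1, h2, h3, h4⟩ := ih (n-2) (by omega) x' y' hcons
        have hx01 := xi_subset_Icc hcons.1
        have hy01 := xi_subset_Icc hcons.2.1
        have hmed : mediant (g1 x') (g1 y') = g1 (mediant x' y') := mediant_g1 hx01 hy01
        refine ⟨tauR^2 * Mx', tauR^2 * My', tauR^2 * Mm',
          TendsToM_g1 hx01 h1, TendsToM_g1 hy01 h2, ?_, by rw [h4]; ring⟩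
        rw [hmed]
        exact TendsToM_g1 (mediant_mem_Icc hx01 hy01) h3
      · have hx : (1/2 : ℚ) ≤ x := by
          by_contra hc
          push_neg at hc
          have := h12 hc
          exact hy this
        obtain ⟨x', y', rfl, rfl, hcons⟩ := consecutive_g2 hn hxy hx
        obtain ⟨Mx', My', Mm', h1, h2, h3, h4⟩ := ih (n-1) (by omega) x' y' hcons
        have hx01 := xi_subset_Icc hcons.1
        have hy01 := xi_subset_Icc hcons.2.1
        have hmed : mediant (g2 x') (g2 y') = g2 (mediant x' y') := mediant_g2 hx01 hy01
        refine ⟨tauR^2 + tauR * Mx', tauR^2 + tauR * My', tauR^2 + tauR * Mm',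
          TendsToM_g2 hx01 h1, TendsToM_g2 hy01 h2, ?_, by rw [h4]; ring⟩
        rw [hmed]
        exact TendsToM_g2 (mediant_mem_Icc hx01 hy01) h3


/-- for consecutive `x < y` in `Ξ_n`, the limits
`M(x), M(y), M(x ⊕ y)` of the distribution ratios exist and satisfy
`M(x ⊕ y) = M(x) + (M(y) - M(x)) · τ²` with `τ² = (3 - √5)/2`. -/
theorem distribution_mediant_relation
    (n : ℕ) (hn : 1 ≤ n) (x y : ℚ) (hxy : IsConsecutive (Xi n) x y) :
    ∃ Mx My Mm : ℝ,
      Filter.Tendsto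
        (fun m : ℕ => (({ξ ∈ Xi m | ξ ≤ x}).ncard : ℝ) / ((Xi m).ncard : ℝ))
        Filter.atTop (nhds Mx) ∧
      Filter.Tendsto
        (fun m : ℕ => (({ξ ∈ Xi m | ξ ≤ y}).ncard : ℝ) / ((Xi m).ncard : ℝ))
        Filter.atTop (nhds My) ∧
      Filter.Tendsto
        (fun m : ℕ =>
          (({ξ ∈ Xi m | ξ ≤ mediant x y}).ncard : ℝ) / ((Xi m).ncard : ℝ))
        Filter.atTop (nhds Mm) ∧
      Mm = Mx + (My - Mx) * ((3 - Real.sqrt 5) / 2) := by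
  obtain ⟨Mx, My, Mm, h1, h2, h3, h4⟩ := main_ind n x y hxy
  exact ⟨Mx, My, Mm, h1, h2, h3, h4⟩
end

section
/- Minkowski's question mark function ?(x) = g_{1/2}(x) is the limit distribution function of the Stern–Brocot sequences: for every x ∈ (0,1), ?(x) = lim_{n→∞} #{ ξ ∈ ℱ_n : ξ ≤ x } / (2^n + 1), where 2^n + 1 = #ℱ_n. -/
open Set Filter

open List

/-- unimodularity -/
def Det (x y : ℚ) : Prop := y.num * x.den - x.num * y.den = 1

lemma Det.lt {x y : ℚ} (h : Det x y) : x < y := by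
  rw [Rat.lt_iff]; unfold Det at h; omega

lemma mediant_num {x y : ℚ} (h : Det x y) :
    (mediant x y).num = x.num + y.num ∧ ((mediant x y).den : ℤ) = (x.den : ℤ) + y.den := by
  unfold Det at h
  have hb : (0:ℤ) < (x.den : ℤ) + (y.den : ℤ) := by positivity
  have hco : IsCoprime (x.num + y.num) ((x.den : ℤ) + y.den) :=
    ⟨x.den, -x.num, by push_cast; ring_nf; linarith [h]⟩
  have hco' : (x.num + y.num).natAbs.Coprime ((x.den : ℤ) + y.den).natAbs :=
    Int.isCoprime_iff_gcd_eq_one.mp hco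
  have hm : mediant x y = ((x.num + y.num : ℤ) : ℚ) / (((x.den : ℤ) + y.den : ℤ) : ℚ) := by
    unfold mediant; push_cast; ring_nf
  constructor
  · rw [hm, Rat.num_div_eq_of_coprime hb hco']
  · rw [hm, Rat.den_div_eq_of_coprime hb hco']

lemma det_left_mediant {x y : ℚ} (h : Det x y) : Det x (mediant x y) := by
  obtain ⟨h1, h2⟩ := mediant_num h
  unfold Det at h ⊢
  rw [h1]
  have : ((mediant x y).den : ℤ) = (x.den : ℤ) + y.den := h2
  rw [this]; ring_nf; ring_nf at h; linarith

lemma det_mediant_right {x y : ℚ} (h : Det x y) : Det (mediant x y) y := by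
  obtain ⟨h1, h2⟩ := mediant_num h
  unfold Det at h ⊢
  rw [h1, h2]; ring_nf; ring_nf at h; linarith

/-- insert mediants between adjacent elements -/
def ins : List ℚ → List ℚ
  | x :: y :: t => x :: mediant x y :: ins (y :: t)
  | l => l

def SBL : ℕ → List ℚ
  | 0 => [0, 1]
  | n + 1 => ins (SBL n)

lemma ins_head? : ∀ (y : ℚ) (t : List ℚ), (ins (y :: t)).head? = some y
  | y, [] => rfl
  | y, _ :: _ => rfl

lemma ins_chain' {R S : ℚ → ℚ → Prop}
    (h1 : ∀ x y, R x y → S x (mediant x y))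
    (h2 : ∀ x y, R x y → S (mediant x y) y) :
    ∀ {l : List ℚ}, l.IsChain R → (ins l).IsChain S
  | [], _ => by simp [ins]
  | [x], _ => by simp [ins]
  | x :: y :: t, h => by
    rw [List.isChain_cons_cons] at h
    obtain ⟨hxy, ht⟩ := h
    show List.IsChain S (x :: mediant x y :: ins (y :: t))
    rw [List.isChain_cons_cons]
    refine ⟨h1 x y hxy, ?_⟩
    rw [List.isChain_cons]
    refine ⟨?_, ins_chain' h1 h2 ht⟩
    intro z hz
    rw [ins_head? y t, Option.mem_some_iff] at hz
    subst hz
    exact h2 x y hxy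

lemma ins_sublist : ∀ l : List ℚ, l <+ ins l
  | [] => by simp [ins]
  | [x] => by simp [ins]
  | x :: y :: t => by
    show x :: y :: t <+ x :: mediant x y :: ins (y :: t)
    exact (((ins_sublist (y :: t)).cons _).cons₂ x)

lemma ins_length : ∀ (x : ℚ) (t : List ℚ), (ins (x :: t)).length = 2 * t.length + 1
  | x, [] => rfl
  | x, y :: t => by
    show (x :: mediant x y :: ins (y :: t)).length = _
    simp [ins_length y t]; ring

lemma ins_get_even : ∀ (l : List ℚ) (k : ℕ) (hk : k < l.length)
    (hk' : 2 * k < (ins l).length), (ins l)[2 * k] = l[k]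
  | [], k, hk, _ => by simp at hk
  | [x], k, hk, _ => by
    have : k = 0 := by simp at hk; omega
    subst this; rfl
  | x :: y :: t, 0, hk, _ => rfl
  | x :: y :: t, (k+1), hk, hk' => by
    show (x :: mediant x y :: ins (y :: t))[2 * (k+1)] = _
    have h1 : k < (y :: t).length := by simpa using Nat.lt_of_succ_lt_succ hk
    have h2 : 2 * k < (ins (y :: t)).length := by
      rw [ins_length]; simp at h1 ⊢; omega
    simp only [show 2 * (k + 1) = (2 * k) + 1 + 1 by ring]
    show (ins (y :: t))[2*k]'h2 = _
    rw [ins_get_even (y :: t) k h1 h2]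
    rfl

lemma ins_get_odd : ∀ (l : List ℚ) (k : ℕ) (hk : k + 1 < l.length)
    (hk' : 2 * k + 1 < (ins l).length),
    (ins l)[2 * k + 1] = mediant (l[k]'(by omega)) (l[k+1]'hk)
  | [], k, hk, _ => by simp at hk
  | [x], k, hk, _ => by simp at hk
  | x :: y :: t, 0, hk, _ => rfl
  | x :: y :: t, (k+1), hk, hk' => by
    show (x :: mediant x y :: ins (y :: t))[2 * (k+1) + 1] = _
    have h1 : k + 1 < (y :: t).length := by simpa using Nat.lt_of_succ_lt_succ hk
    have h2 : 2 * k + 1 < (ins (y :: t)).length := by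
      rw [ins_length]; simp at h1 ⊢; omega
    simp only [show 2 * (k + 1) + 1 = (2 * k + 1) + 1 + 1 by ring]
    show (ins (y :: t))[2*k+1]'h2 = _
    rw [ins_get_odd (y :: t) k h1 h2]
    rfl

lemma SBL_chain'_det : ∀ n, (SBL n).IsChain Det
  | 0 => by
    show List.IsChain Det [0, 1]
    refine List.isChain_cons_cons.mpr ⟨?_, by simp⟩
    show Det 0 1
    simp [Det]
  | n + 1 => ins_chain' (fun x y h => det_left_mediant h) (fun x y h => det_mediant_right h)
      (SBL_chain'_det n)

lemma SBL_sorted (n : ℕ) : (SBL n).IsChain (· < ·) :=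
  List.IsChain.imp (fun a b h => h.lt) (SBL_chain'_det n)

lemma SBL_pairwise (n : ℕ) : (SBL n).Pairwise (· < ·) :=
  List.isChain_iff_pairwise.mp (SBL_sorted n)

lemma SBL_nodup (n : ℕ) : (SBL n).Nodup :=
  (SBL_pairwise n).imp ne_of_lt

lemma SBL_length : ∀ n, (SBL n).length = 2 ^ n + 1
  | 0 => rfl
  | n + 1 => by
    have ih := SBL_length n
    have hne : SBL n ≠ [] := by intro e; rw [e] at ih; simp at ih
    obtain ⟨x, t, he⟩ := List.exists_cons_of_ne_nil hne
    show (ins (SBL n)).length = _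
    rw [he, ins_length]
    rw [he] at ih; simp at ih ⊢
    omega

lemma SBL_head? : ∀ n, (SBL n).head? = some 0
  | 0 => rfl
  | n + 1 => by
    have ih := SBL_head? n
    have hne : SBL n ≠ [] := by intro e; rw [e] at ih; simp at ih
    obtain ⟨x, t, he⟩ := List.exists_cons_of_ne_nil hne
    have hx : x = 0 := by rw [he] at ih; simpa using ih
    show (ins (SBL n)).head? = some 0
    rw [he, ins_head?, hx]

lemma SBL_mem_one : ∀ n, (1 : ℚ) ∈ SBL n
  | 0 => by simp [SBL]
  | n + 1 => (ins_sublist (SBL n)).subset (SBL_mem_one n)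

lemma SBL_mem_zero : ∀ n, (0 : ℚ) ∈ SBL n
  | 0 => by simp [SBL]
  | n + 1 => (ins_sublist (SBL n)).subset (SBL_mem_zero n)

lemma infix_consecutive {l : List ℚ} (hl : l.IsChain (· < ·)) {x y : ℚ}
    (h : [x, y] <:+: l) : IsConsecutive {a | a ∈ l} x y := by
  have hp : l.Pairwise (· < ·) := List.isChain_iff_pairwise.mp hl
  obtain ⟨s, t, rfl⟩ := h
  have hp' : (s ++ (x :: y :: t)).Pairwise (· < ·) := by simpa using hp
  rw [List.pairwise_append] at hp'
  obtain ⟨hps, hpm, hcross⟩ := hp'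
  rw [List.pairwise_cons] at hpm
  obtain ⟨hx1, hpm2⟩ := hpm
  rw [List.pairwise_cons] at hpm2
  obtain ⟨hy1, _⟩ := hpm2
  have hxy : x < y := hx1 y (by simp)
  refine ⟨by simp, by simp, hxy, ?_⟩
  rintro z hz ⟨h1, h2⟩
  have hz' : z ∈ s ∨ z ∈ x :: y :: t := by
    simpa using (hz : z ∈ s ++ [x, y] ++ t)
  rcases hz' with hz' | hz'
  · exact absurd (hcross z hz' x (by simp)) (asymm h1)
  · simp only [List.mem_cons] at hz'
    rcases hz' with rfl | rfl | hz'
    · exact absurd h1 (lt_irrefl _)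
    · exact absurd h2 (lt_irrefl _)
    · exact absurd (hy1 z hz') (asymm h2)

lemma consecutive_infix : ∀ {l : List ℚ} {x y : ℚ}, l.IsChain (· < ·) →
    IsConsecutive {a | a ∈ l} x y → [x, y] <:+: l
  | [], x, y, _, h => absurd h.1 (by simp)
  | a :: l', x, y, hc, h => by
    obtain ⟨hx, hy, hxy, hbet⟩ := h
    have hp : (a :: l').Pairwise (· < ·) := List.isChain_iff_pairwise.mp hc
    rw [List.pairwise_cons] at hp
    by_cases hxa : x = a
    · subst hxa
      have hy' : y ∈ l' := by
        have hy2 : y = x ∨ y ∈ l' := List.mem_cons.mp hy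
        rcases hy2 with rfl | h
        · exact absurd hxy (lt_irrefl _)
        · exact h
      obtain ⟨b, t, rfl⟩ := List.exists_cons_of_ne_nil (List.ne_nil_of_mem hy')
      have hxb : x < b := (List.isChain_cons_cons.mp hc).1
      have hyb : y = b := by
        have hy2 : y = b ∨ y ∈ t := List.mem_cons.mp hy'
        rcases hy2 with h | h
        · exact h
        · have hby : b < y := by
            have := List.isChain_iff_pairwise.mp (List.isChain_cons_cons.mp hc).2
            rw [List.pairwise_cons] at this
            exact this.1 y h
          exact absurd ⟨hxb, hby⟩ (hbet b (by simp))
      subst hyb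
      exact ⟨[], t, rfl⟩
    · have hx' : x ∈ l' := by
        have hx2 : x = a ∨ x ∈ l' := List.mem_cons.mp hx
        rcases hx2 with h | h
        · exact absurd h hxa
        · exact h
      have hy' : y ∈ l' := by
        have hy2 : y = a ∨ y ∈ l' := List.mem_cons.mp hy
        rcases hy2 with rfl | h
        · exact absurd (hxy.trans (hp.1 x hx')) (lt_irrefl _)
        · exact h
      have ih : [x, y] <:+: l' :=
        consecutive_infix hc.tail
          ⟨hx', hy', hxy, fun z hz => hbet z (by simp [Set.mem_setOf_eq.mp hz])⟩
      obtain ⟨s, t, rfl⟩ := ih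
      exact ⟨a :: s, t, rfl⟩

lemma ins_set : ∀ l : List ℚ,
    {a | a ∈ ins l} = {a | a ∈ l} ∪ {z | ∃ x y, [x, y] <:+: l ∧ z = mediant x y}
  | [] => by
    ext z
    simp only [ins, Set.mem_setOf_eq, Set.mem_union]
    constructor
    · exact fun h => Or.inl h
    · rintro (h | ⟨x, y, hinf, rfl⟩)
      · exact h
      · have := hinf.sublist.length_le; simp at this
  | [a] => by
    ext z
    simp only [ins, Set.mem_setOf_eq, Set.mem_union]
    constructor
    · exact fun h => Or.inl h
    · rintro (h | ⟨x, y, hinf, rfl⟩)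
      · exact h
      · have := hinf.sublist.length_le; simp at this
  | x :: y :: t => by
    have ih := ins_set (y :: t)
    have hinfix : ∀ a b : ℚ, ([a, b] <:+: x :: y :: t) ↔
        (a = x ∧ b = y) ∨ [a, b] <:+: y :: t := by
      intro a b
      rw [List.infix_cons_iff, List.cons_prefix_cons]
      constructor
      · rintro (⟨rfl, hpre⟩ | h)
        · rw [List.cons_prefix_cons] at hpre
          exact Or.inl ⟨rfl, hpre.1⟩
        · exact Or.inr h
      · rintro (⟨rfl, rfl⟩ | h)
        · exact Or.inl ⟨rfl, List.cons_prefix_cons.mpr ⟨rfl, List.nil_prefix⟩⟩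
        · exact Or.inr h
    ext z
    have hz : z ∈ ins (x :: y :: t) ↔ z = x ∨ z = mediant x y ∨ z ∈ ins (y :: t) := by
      show z ∈ x :: mediant x y :: ins (y :: t) ↔ _
      simp
    simp only [Set.mem_setOf_eq, Set.mem_union, hz]
    have hz2 : z ∈ ins (y :: t) ↔ z ∈ y :: t ∨ ∃ a b, ([a, b] <:+: y :: t) ∧ z = mediant a b := by
      have := Set.ext_iff.mp ih z
      simpa using this
    rw [hz2]
    simp only [List.mem_cons, hinfix]
    constructor
    · rintro (rfl | rfl | (h | h) | ⟨a, b, hab, rfl⟩)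
      · exact Or.inl (Or.inl rfl)
      · exact Or.inr ⟨x, y, Or.inl ⟨rfl, rfl⟩, rfl⟩
      · exact Or.inl (Or.inr (Or.inl h))
      · exact Or.inl (Or.inr (Or.inr h))
      · exact Or.inr ⟨a, b, Or.inr hab, rfl⟩
    · rintro ((rfl | h) | ⟨a, b, (⟨rfl, rfl⟩ | hab), rfl⟩)
      · exact Or.inl rfl
      · exact Or.inr (Or.inr (Or.inl h))
      · exact Or.inr (Or.inl rfl)
      · exact Or.inr (Or.inr (Or.inr ⟨a, b, hab, rfl⟩))

lemma sternBrocot_eq : ∀ n, sternBrocot n = {a | a ∈ SBL n}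
  | 0 => by
    ext z
    show z ∈ ({0, 1} : Set ℚ) ↔ z ∈ ({a | a ∈ [0, 1]} : Set ℚ)
    simp
  | n + 1 => by
    have ih := sternBrocot_eq n
    show sternBrocot n ∪ _ = {a | a ∈ ins (SBL n)}
    rw [ins_set, ih]
    congr 1
    ext z
    simp only [Set.mem_setOf_eq]
    constructor
    · rintro ⟨x, y, hcon, rfl⟩
      exact ⟨x, y, consecutive_infix (SBL_sorted n) hcon, rfl⟩
    · rintro ⟨x, y, hinf, rfl⟩
      exact ⟨x, y, infix_consecutive (SBL_sorted n) hinf, rfl⟩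

lemma consecutive_iff (n : ℕ) (x y : ℚ) :
    IsConsecutive (sternBrocot n) x y ↔ [x, y] <:+: SBL n := by
  rw [sternBrocot_eq n]
  exact ⟨consecutive_infix (SBL_sorted n), infix_consecutive (SBL_sorted n)⟩

lemma get_pair_infix : ∀ (l : List ℚ) (j : ℕ) (h : j + 1 < l.length),
    [l[j]'(by omega), l[j+1]'h] <:+: l
  | [], j, h => by simp at h
  | a :: t, 0, h => by
    obtain ⟨b, t', rfl⟩ := List.exists_cons_of_ne_nil
      (l := t) (by intro e; subst e; simp at h)
    exact ⟨[], t', rfl⟩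
  | a :: t, j + 1, h => by
    have h' : j + 1 < t.length := by simpa using h
    obtain ⟨s, u, he⟩ := get_pair_infix t j h'
    refine ⟨a :: s, u, ?_⟩
    simp only [List.cons_append, List.getElem_cons_succ]
    rw [he]

lemma SBL_det_den : ∀ n, (SBL n).IsChain (fun x y => Det x y ∧ n + 2 ≤ x.den + y.den)
  | 0 => by
    show List.IsChain _ [0, 1]
    refine List.isChain_cons_cons.mpr ⟨⟨?_, ?_⟩, by simp⟩
    · show Det 0 1; simp [Det]
    · show 0 + 2 ≤ (0:ℚ).den + (1:ℚ).den
      norm_num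
  | n + 1 => by
    refine ins_chain' ?_ ?_ (SBL_det_den n)
    · rintro x y ⟨hd, hs⟩
      refine ⟨det_left_mediant hd, ?_⟩
      have h2 := (mediant_num hd).2
      have hx := x.pos
      omega
    · rintro x y ⟨hd, hs⟩
      refine ⟨det_mediant_right hd, ?_⟩
      have h2 := (mediant_num hd).2
      have hy := y.pos
      omega

lemma infix_det {n : ℕ} {x y : ℚ} (h : [x, y] <:+: SBL n) :
    Det x y ∧ n + 2 ≤ x.den + y.den := by
  have := (SBL_det_den n).infix h
  exact (List.isChain_cons_cons.mp this).1

lemma det_sub {x y : ℚ} (h : Det x y) :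
    y - x = 1 / ((x.den : ℚ) * (y.den : ℚ)) := by
  have hx : (x.den : ℚ) ≠ 0 := by
    simpa using x.den_nz
  have hy : (y.den : ℚ) ≠ 0 := by
    simpa using y.den_nz
  have ex : (x : ℚ) * (x.den : ℚ) = (x.num : ℚ) := by
    have h0 := Rat.num_div_den x
    rw [div_eq_iff hx] at h0
    linarith
  have ey : (y : ℚ) * (y.den : ℚ) = (y.num : ℚ) := by
    have h0 := Rat.num_div_den y
    rw [div_eq_iff hy] at h0
    linarith
  have hdet : (y.num : ℚ) * (x.den : ℚ) - (x.num : ℚ) * (y.den : ℚ) = 1 := by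
    have := congrArg (fun z : ℤ => (z : ℚ)) h
    push_cast at this
    linarith
  rw [eq_div_iff (by positivity)]
  calc (y - x) * ((x.den : ℚ) * (y.den : ℚ))
      = (y * y.den) * x.den - (x * x.den) * y.den := by ring
    _ = (y.num : ℚ) * x.den - (x.num : ℚ) * y.den := by rw [ex, ey]
    _ = 1 := hdet

lemma SBL_mem_Icc : ∀ n, ∀ a ∈ SBL n, (0:ℚ) ≤ a ∧ a ≤ 1
  | 0, a, ha => by
    have : a = 0 ∨ a = 1 := by simpa [SBL] using ha
    rcases this with rfl | rfl <;> norm_num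
  | n + 1, a, ha => by
    have ha' : a ∈ {b | b ∈ SBL n} ∪
        {z | ∃ x y, [x, y] <:+: SBL n ∧ z = mediant x y} := by
      rw [← ins_set]
      exact ha
    rcases ha' with h | h
    · exact SBL_mem_Icc n a h
    · obtain ⟨x, y, hinf, rfl⟩ := h
      have hd := (infix_det hinf).1
      have hx := SBL_mem_Icc n x (by obtain ⟨s, t, he⟩ := hinf; rw [← he]; simp)
      have hy := SBL_mem_Icc n y (by obtain ⟨s, t, he⟩ := hinf; rw [← he]; simp)
      have h1 : x < mediant x y := (det_left_mediant hd).lt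
      have h2 : mediant x y < y := (det_mediant_right hd).lt
      exact ⟨le_trans hx.1 h1.le, le_trans h2.le hy.2⟩

section GVals

variable (g : ℝ → ℝ)

lemma g_SBL (hg0 : g 0 = 0) (hg1 : g 1 = 1)
    (hrec : ∀ n : ℕ, ∀ x y : ℚ, IsConsecutive (sternBrocot n) x y →
      g ((mediant x y : ℚ) : ℝ) =
        g (x : ℝ) + (1 / 2 : ℝ) * (g (y : ℝ) - g (x : ℝ))) :
    ∀ n k (hk : k < (SBL n).length), g (((SBL n)[k] : ℚ) : ℝ) = (k : ℝ) / 2 ^ n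
  | 0, 0, hk => by
    show g ((0 : ℚ) : ℝ) = _
    norm_num [hg0]
  | 0, 1, hk => by
    show g ((1 : ℚ) : ℝ) = _
    norm_num [hg1]
  | 0, k + 2, hk => by
    have : (SBL 0).length = 2 := rfl
    omega
  | n + 1, k, hk => by
    have hlen := SBL_length n
    have hlen' := SBL_length (n + 1)
    rcases Nat.even_or_odd k with ⟨j, hj⟩ | ⟨j, hj⟩
    · have hj' : k = 2 * j := by omega
      subst hj'
      have h1 : j < (SBL n).length := by
        rw [hlen]; rw [hlen'] at hk; omega
      have : (SBL (n+1))[2*j]'hk = (SBL n)[j]'h1 := ins_get_even (SBL n) j h1 hk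
      rw [this, g_SBL hg0 hg1 hrec n j h1]
      push_cast
      rw [pow_succ]
      field_simp
    · subst hj
      have h1 : j + 1 < (SBL n).length := by
        rw [hlen]; rw [hlen'] at hk; omega
      have h0 : j < (SBL n).length := by omega
      have : (SBL (n+1))[2*j+1]'hk =
          mediant ((SBL n)[j]'h0) ((SBL n)[j+1]'h1) := ins_get_odd (SBL n) j h1 hk
      rw [this]
      have hcon : IsConsecutive (sternBrocot n) ((SBL n)[j]'h0) ((SBL n)[j+1]'h1) :=
        (consecutive_iff n _ _).mpr (get_pair_infix (SBL n) j h1)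
      rw [hrec n _ _ hcon, g_SBL hg0 hg1 hrec n j h0, g_SBL hg0 hg1 hrec n (j+1) h1]
      push_cast
      rw [pow_succ]
      field_simp
      ring

end GVals

lemma filter_eq_takeWhile {p : ℚ → Bool} (hp : ∀ a b : ℚ, a ≤ b → p b = true → p a = true) :
    ∀ {l : List ℚ}, l.IsChain (· < ·) → l.filter p = l.takeWhile p
  | [], _ => rfl
  | a :: t, hc => by
    by_cases hpa : p a = true
    · rw [List.filter_cons_of_pos hpa, List.takeWhile_cons_of_pos hpa]
      congr 1
      exact filter_eq_takeWhile hp (hc.tail : List.IsChain _ t)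
    · rw [List.filter_cons_of_neg hpa, List.takeWhile_cons_of_neg hpa]
      apply List.filter_eq_nil_iff.mpr
      intro b hb hpb
      have hab : a < b := by
        have := List.isChain_iff_pairwise.mp hc
        rw [List.pairwise_cons] at this
        exact this.1 b hb
      exact hpa (hp a b hab.le hpb)

lemma ncard_filter (p : ℚ → Bool) (n : ℕ) :
    {ξ | ξ ∈ sternBrocot n ∧ p ξ = true}.ncard = ((SBL n).filter p).length := by
  rw [sternBrocot_eq]
  have h1 : {ξ | ξ ∈ {a | a ∈ SBL n} ∧ p ξ = true} = ↑((SBL n).filter p).toFinset := by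
    ext z; simp [List.mem_filter]
  rw [h1, Set.ncard_coe_finset, List.toFinset_card_of_nodup ((SBL_nodup n).filter p)]

lemma SBL_cons_zero (n : ℕ) : ∃ t, SBL n = 0 :: t := by
  have h := SBL_head? n
  cases he : SBL n with
  | nil => rw [he] at h; simp at h
  | cons a t =>
    rw [he] at h
    simp only [List.head?_cons, Option.some.injEq] at h
    exact ⟨t, by rw [h]⟩

lemma takeWhile_pos {p : ℚ → Bool} (n : ℕ) (hp0 : p 0 = true) :
    1 ≤ ((SBL n).takeWhile p).length := by
  obtain ⟨t, ht⟩ := SBL_cons_zero n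
  rw [ht, List.takeWhile_cons_of_pos hp0]
  simp

lemma takeWhile_lt {p : ℚ → Bool} (n : ℕ) (hp1 : p 1 = false) :
    ((SBL n).takeWhile p).length < (SBL n).length := by
  have hle : ((SBL n).takeWhile p).length ≤ (SBL n).length :=
    (List.takeWhile_prefix p).sublist.length_le
  rcases lt_or_eq_of_le hle with h | h
  · exact h
  · exfalso
    have heq : (SBL n).takeWhile p = SBL n :=
      (List.takeWhile_prefix p).eq_of_length h
    have : p 1 = true :=
      List.mem_takeWhile_imp (x := (1:ℚ)) (by rw [heq]; exact SBL_mem_one n)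
    rw [hp1] at this; exact Bool.false_ne_true this

lemma getElem_takeWhile_prop {p : ℚ → Bool} {l : List ℚ} {j : ℕ}
    (hj : j < (l.takeWhile p).length) (hj' : j < l.length) :
    p (l[j]) = true := by
  have he := List.takeWhile_append_dropWhile (p := p) (l := l)
  have h0 : l[j] = (l.takeWhile p ++ l.dropWhile p)[j]'(by rw [he]; exact hj') :=
    List.getElem_of_eq he.symm hj'
  rw [h0, List.getElem_append_left hj]
  exact List.mem_takeWhile_imp (List.getElem_mem _)

lemma getElem_after_takeWhile {p : ℚ → Bool} {l : List ℚ}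
    (hj : (l.takeWhile p).length < l.length) :
    p (l[(l.takeWhile p).length]) = false := by
  have he := List.takeWhile_append_dropWhile (p := p) (l := l)
  have hlen : l.length = (l.takeWhile p).length + (l.dropWhile p).length := by
    conv_lhs => rw [← he]
    exact List.length_append
  have hd : l.dropWhile p ≠ [] := by
    intro hnil
    rw [hnil] at hlen
    simp at hlen
    omega
  have h0 : l[(l.takeWhile p).length] =
      (l.takeWhile p ++ l.dropWhile p)[(l.takeWhile p).length]'(by rw [he]; exact hj) :=
    List.getElem_of_eq he.symm hj
  have h1 : (l.takeWhile p ++ l.dropWhile p)[(l.takeWhile p).length]'(by rw [he]; exact hj) =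
      (l.dropWhile p)[(l.takeWhile p).length - (l.takeWhile p).length]'(by omega) :=
    List.getElem_append_right (le_refl _)
  have h2 : (l.dropWhile p)[(l.takeWhile p).length - (l.takeWhile p).length]'(by omega) =
      (l.dropWhile p).head hd := by
    rw [List.head_eq_getElem_zero hd]
    congr 1
    omega
  rw [h0, h1, h2]
  exact List.head_dropWhile_not p hd


/-- Minkowski's question mark function `? = g_{1/2}` is the limit
distribution function of the Stern–Brocot sequences, whose cardinalities are
`#ℱ_n = 2^n + 1`. -/
theorem minkowski_is_distribution_of_sternBrocot
    (g : ℝ → ℝ)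
    (hg0 : g 0 = 0) (hg1 : g 1 = 1)
    (hgc : ContinuousOn g (Set.Icc (0 : ℝ) 1))
    (hrec : ∀ n : ℕ, ∀ x y : ℚ, IsConsecutive (sternBrocot n) x y →
      g ((mediant x y : ℚ) : ℝ) =
        g (x : ℝ) + (1 / 2 : ℝ) * (g (y : ℝ) - g (x : ℝ))) :
    (∀ n : ℕ, (sternBrocot n).ncard = 2 ^ n + 1) ∧
      ∀ x ∈ Set.Ioo (0 : ℝ) 1,
        Filter.Tendsto
          (fun n : ℕ =>
            (({ξ ∈ sternBrocot n | (ξ : ℝ) ≤ x}).ncard : ℝ) / ((2 : ℝ) ^ n + 1))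
          Filter.atTop (nhds (g x)) := by
  classical
  constructor
  · intro n
    rw [sternBrocot_eq n]
    have h1 : {a | a ∈ SBL n} = (↑(SBL n).toFinset : Set ℚ) := by ext z; simp
    rw [h1, Set.ncard_coe_finset, List.toFinset_card_of_nodup (SBL_nodup n), SBL_length]
  · rintro x ⟨hx0, hx1⟩
    set p : ℚ → Bool := fun ξ => decide ((ξ : ℝ) ≤ x) with hpdef
    have hpiff : ∀ ξ : ℚ, p ξ = true ↔ (ξ : ℝ) ≤ x := by intro ξ; simp [hpdef]
    have hpmono : ∀ a b : ℚ, a ≤ b → p b = true → p a = true := by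
      intro a b hab h
      rw [hpiff] at h ⊢
      exact le_trans (by exact_mod_cast hab) h
    have hp0 : p 0 = true := by rw [hpiff]; push_cast; linarith
    have hp1 : p 1 = false := by
      rw [← Bool.not_eq_true, hpiff]; push_cast; linarith
    set c : ℕ → ℕ := fun n => ((SBL n).takeWhile p).length with hcdef
    have hc1 : ∀ n, 1 ≤ c n := fun n => takeWhile_pos n hp0
    have hclt : ∀ n, c n < (SBL n).length := fun n => takeWhile_lt n hp1
    have hcount : ∀ n, ({ξ ∈ sternBrocot n | (ξ : ℝ) ≤ x}).ncard = c n := by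
      intro n
      have h2 : {ξ ∈ sternBrocot n | (ξ : ℝ) ≤ x} = {ξ | ξ ∈ sternBrocot n ∧ p ξ = true} := by
        ext ξ
        simp only [Set.mem_setOf_eq, Set.mem_sep_iff, hpiff]
      rw [h2, ncard_filter, hcdef]
      congr 1
      exact filter_eq_takeWhile hpmono (SBL_sorted n)
    have hcm1 : ∀ n, c n - 1 < (SBL n).length :=
      fun n => lt_of_le_of_lt (Nat.sub_le _ _) (hclt n)
    set a : ℕ → ℚ := fun n => (SBL n)[c n - 1]'(hcm1 n) with hadef
    set b : ℕ → ℚ := fun n => (SBL n)[c n]'(hclt n) with hbdef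
    have hpa : ∀ n, ((a n : ℚ) : ℝ) ≤ x := by
      intro n
      rw [← hpiff]
      exact getElem_takeWhile_prop (Nat.sub_lt (hc1 n) one_pos) (hcm1 n)
    have hpb : ∀ n, x < ((b n : ℚ) : ℝ) := by
      intro n
      have h3 := getElem_after_takeWhile (l := SBL n) (p := p) (hclt n)
      have h4 : ¬ (((b n : ℚ) : ℝ) ≤ x) := by
        rw [← hpiff]
        simp only [hbdef, Bool.not_eq_true]; exact h3
      exact lt_of_not_ge h4
    have hinf : ∀ n, [a n, b n] <:+: SBL n := by
      intro n
      have he : c n - 1 + 1 = c n := by have := hc1 n; omega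
      have h5 := get_pair_infix (SBL n) (c n - 1) (by rw [he]; exact hclt n)
      simp only [he] at h5
      exact h5
    have hdet : ∀ n, Det (a n) (b n) := fun n => (infix_det (hinf n)).1
    have hden : ∀ n, n + 2 ≤ (a n).den + (b n).den := fun n => (infix_det (hinf n)).2
    have hga : ∀ n, g ((a n : ℚ) : ℝ) = ((c n : ℝ) - 1) / 2 ^ n := by
      intro n
      have h6 := g_SBL g hg0 hg1 hrec n (c n - 1) (hcm1 n)
      rw [hadef]
      rw [h6]
      congr 1
      have := hc1 n
      rw [Nat.cast_sub this]
      push_cast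
      ring
    have hgap : ∀ n : ℕ, ((b n : ℚ) : ℝ) - ((a n : ℚ) : ℝ) ≤ 2 / ((n : ℝ) + 2) := by
      intro n
      have h7 : ((b n - a n : ℚ) : ℝ) =
          1 / (((a n).den : ℝ) * ((b n).den : ℝ)) := by
        rw [det_sub (hdet n)]
        push_cast
        ring
      have had : 1 ≤ (a n).den := (a n).pos
      have hbd : 1 ≤ (b n).den := (b n).pos
      have hsum := hden n
      have hnat : n + 2 ≤ 2 * ((a n).den * (b n).den) := by nlinarith
      have hpos : (0:ℝ) < ((a n).den : ℝ) * ((b n).den : ℝ) := by positivity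
      have h8 : ((b n : ℚ) : ℝ) - ((a n : ℚ) : ℝ) = 1 / (((a n).den : ℝ) * ((b n).den : ℝ)) := by
        rw [← h7]; push_cast; ring
      rw [h8, div_le_div_iff₀ hpos (by positivity)]
      have : ((n : ℝ) + 2) ≤ 2 * (((a n).den : ℝ) * ((b n).den : ℝ)) := by
        exact_mod_cast hnat
      linarith
    have hx_seq : Tendsto (fun n => ((a n : ℚ) : ℝ)) atTop (nhds x) := by
      rw [tendsto_iff_dist_tendsto_zero]
      have hub : Tendsto (fun n : ℕ => 2 / ((n : ℝ) + 2)) atTop (nhds 0) := by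
        have h9 : Tendsto (fun n : ℕ => ((n : ℝ) + 2)) atTop atTop :=
          tendsto_atTop_add_const_right _ 2 tendsto_natCast_atTop_atTop
        have h10 : Tendsto (fun n : ℕ => ((n : ℝ) + 2)⁻¹) atTop (nhds 0) :=
          h9.inv_tendsto_atTop
        have h11 := h10.const_mul (2 : ℝ)
        rw [mul_zero] at h11
        refine h11.congr (fun n => ?_)
        rw [div_eq_mul_inv, mul_comm]
      refine squeeze_zero (fun n => dist_nonneg) (fun n => ?_) hub
      rw [Real.dist_eq, abs_of_nonpos (by linarith [hpa n])]
      have := hpb n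
      have := hgap n
      linarith
    have hcont : Tendsto (fun n => g ((a n : ℚ) : ℝ)) atTop (nhds (g x)) := by
      have hxm : x ∈ Set.Icc (0:ℝ) 1 := ⟨hx0.le, hx1.le⟩
      have h12 : Tendsto (fun n => ((a n : ℚ) : ℝ)) atTop (nhdsWithin x (Set.Icc 0 1)) := by
        refine tendsto_nhdsWithin_of_tendsto_nhds_of_eventually_within _ hx_seq
          (Filter.Eventually.of_forall (fun n => ?_))
        have hm := SBL_mem_Icc n (a n) (by rw [hadef]; exact List.getElem_mem _)
        constructor
        · exact_mod_cast hm.1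
        · exact_mod_cast hm.2
      exact ((hgc x hxm).tendsto).comp h12
    have hfin : Tendsto (fun n : ℕ => ((c n : ℝ)) / ((2:ℝ)^n + 1)) atTop (nhds (g x)) := by
      have hpow : Tendsto (fun n : ℕ => (2:ℝ)^n) atTop atTop :=
        tendsto_pow_atTop_atTop_of_one_lt one_lt_two
      have hbig : Tendsto (fun n : ℕ => (2:ℝ)^n + 1) atTop atTop :=
        tendsto_atTop_add_const_right _ 1 hpow
      have hinv : Tendsto (fun n : ℕ => ((2:ℝ)^n + 1)⁻¹) atTop (nhds 0) :=
        hbig.inv_tendsto_atTop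
      have hfrac : Tendsto (fun n : ℕ => (2:ℝ)^n / ((2:ℝ)^n + 1)) atTop (nhds 1) := by
        have heq : ∀ n : ℕ, (2:ℝ)^n / ((2:ℝ)^n + 1) = 1 - ((2:ℝ)^n+1)⁻¹ := by
          intro n
          have h2 : (0:ℝ) < (2:ℝ)^n + 1 := by positivity
          field_simp
          ring
        simp only [heq]
        simpa using tendsto_const_nhds.sub hinv
      have hmain : Tendsto
          (fun n => g ((a n : ℚ):ℝ) * ((2:ℝ)^n/((2:ℝ)^n+1)) + ((2:ℝ)^n+1)⁻¹)
          atTop (nhds (g x * 1 + 0)) := (hcont.mul hfrac).add hinv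
      rw [mul_one, add_zero] at hmain
      refine hmain.congr (fun n => ?_)
      rw [hga n]
      have h2 : (0:ℝ) < (2:ℝ)^n := by positivity
      have hcge := hc1 n
      field_simp
      ring
    refine hfin.congr (fun n => ?_)
    rw [hcount n]
end

section
/- For every λ ∈ (0,1), the Tichy–Uitz function g_λ, defined on the rationals in [0,1] by the mediant recursion, is strictly increasing on ℚ ∩ [0,1] and extends (uniquely) to a continuous increasing function from [0,1] onto [0,1]. -/
open Set Filter

namespace SBAux

/-- Unimodularity of a pair. -/
def Adj (x y : ℚ) : Prop := y.num * x.den - x.num * y.den = 1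

/-- `x` and `y` are adjacent entries of the list `l`. -/
inductive Adjacent : List ℚ → ℚ → ℚ → Prop
  | head (x y : ℚ) (t : List ℚ) : Adjacent (x :: y :: t) x y
  | tail (a : ℚ) {l : List ℚ} {x y : ℚ} : Adjacent l x y → Adjacent (a :: l) x y

/-- Insert mediants between adjacent entries. -/
def ins : List ℚ → List ℚ
  | x :: y :: t => x :: mediant x y :: ins (y :: t)
  | l => l

def sbList : ℕ → List ℚ
  | 0 => [0, 1]
  | n + 1 => ins (sbList n)

lemma rat_lt_iff (x y : ℚ) : x < y ↔ x.num * y.den < y.num * x.den := by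
  conv_lhs => rw [← Rat.num_div_den x, ← Rat.num_div_den y]
  rw [div_lt_div_iff₀ (by exact_mod_cast x.pos) (by exact_mod_cast y.pos)]
  exact_mod_cast Iff.rfl

lemma Adj.lt {x y : ℚ} (h : Adj x y) : x < y := by
  rw [rat_lt_iff]
  have hx := x.pos; have hy := y.pos
  unfold Adj at h; nlinarith [h]

lemma mediant_num_den {x y : ℚ} (h : Adj x y) :
    (mediant x y).num = x.num + y.num ∧ ((mediant x y).den : ℤ) = (x.den : ℤ) + y.den := by
  have hd : (0 : ℤ) < (x.den : ℤ) + y.den := by positivity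
  have hg1 : Int.gcd (x.num + y.num) ((x.den : ℤ) + y.den) = 1 := by
    have h1 : (Int.gcd (x.num + y.num) ((x.den : ℤ) + y.den) : ℤ) ∣ (x.num + y.num) :=
      Int.gcd_dvd_left _ _
    have h2 : (Int.gcd (x.num + y.num) ((x.den : ℤ) + y.den) : ℤ) ∣ ((x.den : ℤ) + y.den) :=
      Int.gcd_dvd_right _ _
    have key : ((x.den : ℤ) + y.den) * y.num - (x.num + y.num) * y.den = 1 := by
      unfold Adj at h; linear_combination h
    have hdvd : (Int.gcd (x.num + y.num) ((x.den : ℤ) + y.den) : ℤ) ∣ 1 := by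
      calc (Int.gcd (x.num + y.num) ((x.den : ℤ) + y.den) : ℤ)
          ∣ ((x.den : ℤ) + y.den) * y.num - (x.num + y.num) * y.den :=
            dvd_sub (h2.mul_right _) (h1.mul_right _)
        _ = 1 := key
    have := Int.eq_one_of_dvd_one (by positivity) hdvd
    exact_mod_cast this
  have hcop : Nat.Coprime (x.num + y.num).natAbs ((x.den : ℤ) + y.den).natAbs := hg1
  have hm : mediant x y = ((x.num + y.num : ℤ) : ℚ) / (((x.den : ℤ) + y.den : ℤ) : ℚ) := by
    unfold mediant; push_cast; ring
  constructor
  · rw [hm]; exact Rat.num_div_eq_of_coprime hd hcop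
  · rw [hm]; exact Rat.den_div_eq_of_coprime hd hcop

lemma adj_mediant_left {x y : ℚ} (h : Adj x y) : Adj x (mediant x y) := by
  obtain ⟨hn, hd⟩ := mediant_num_den h
  unfold Adj at h ⊢
  rw [hn, hd]; linear_combination h

lemma adj_mediant_right {x y : ℚ} (h : Adj x y) : Adj (mediant x y) y := by
  obtain ⟨hn, hd⟩ := mediant_num_den h
  unfold Adj at h ⊢
  rw [hn, hd]; linear_combination h

end SBAux
namespace SBAux

lemma ins_nil : ins [] = [] := rfl
lemma ins_single (a : ℚ) : ins [a] = [a] := rfl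
lemma ins_cons_cons (x y : ℚ) (t : List ℚ) :
    ins (x :: y :: t) = x :: mediant x y :: ins (y :: t) := rfl

lemma ins_cons_head (y : ℚ) (t : List ℚ) : ∃ r, ins (y :: t) = y :: r := by
  cases t with
  | nil => exact ⟨[], rfl⟩
  | cons b t' => exact ⟨_, rfl⟩

lemma adjacent_nil {x y : ℚ} : ¬ Adjacent [] x y := fun h => by cases h

lemma adjacent_single {a x y : ℚ} : ¬ Adjacent [a] x y := fun h => by
  cases h with
  | tail _ h' => exact adjacent_nil h'

lemma adjacent_cons_cons {x y a b : ℚ} {t : List ℚ} :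
    Adjacent (x :: y :: t) a b ↔ (a = x ∧ b = y) ∨ Adjacent (y :: t) a b := by
  constructor
  · intro h
    cases h with
    | head => exact Or.inl ⟨rfl, rfl⟩
    | tail _ h' => exact Or.inr h'
  · rintro (⟨rfl, rfl⟩ | h')
    · exact Adjacent.head _ _ _
    · exact Adjacent.tail _ h'

lemma adjacent_shape {l : List ℚ} {x y : ℚ} (h : Adjacent l x y) :
    ∃ p q r, l = p :: q :: r := by
  induction h with
  | head x y t => exact ⟨x, y, t, rfl⟩
  | tail a h' ih =>
    obtain ⟨p, q, r, hl⟩ := ih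
    exact ⟨a, p, q :: r, by rw [hl]⟩

lemma adjacent_mem_left {l : List ℚ} {x y : ℚ} (h : Adjacent l x y) : x ∈ l := by
  induction h with
  | head => exact List.mem_cons_self
  | tail a _ ih => exact List.mem_cons_of_mem a ih

lemma adjacent_mem_right {l : List ℚ} {x y : ℚ} (h : Adjacent l x y) : y ∈ l := by
  induction h with
  | head => exact List.mem_cons_of_mem _ (List.mem_cons_self)
  | tail a _ ih => exact List.mem_cons_of_mem a ih

lemma adjacent_rel {R : ℚ → ℚ → Prop} {l : List ℚ} {x y : ℚ}
    (hc : List.Chain' R l) (h : Adjacent l x y) : R x y := by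
  induction h with
  | head => exact (List.isChain_cons_cons.mp hc).1
  | tail a _ ih => exact ih hc.tail

lemma mem_ins : ∀ (l : List ℚ) (z : ℚ),
    z ∈ ins l ↔ z ∈ l ∨ ∃ x y, Adjacent l x y ∧ z = mediant x y
  | [], z => by
    rw [ins_nil]
    simp only [List.not_mem_nil, false_or]
    constructor
    · intro h; exact absurd h (by simp)
    · rintro ⟨x, y, h, _⟩; exact absurd h adjacent_nil
  | [a], z => by
    rw [ins_single]
    constructor
    · intro h; exact Or.inl h
    · rintro (h | ⟨x, y, h, _⟩)
      · exact h
      · exact absurd h adjacent_single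
  | x :: y :: t, z => by
    rw [ins_cons_cons, List.mem_cons, List.mem_cons, mem_ins (y :: t) z]
    constructor
    · rintro (rfl | rfl | hz | ⟨a, b, hadj, rfl⟩)
      · exact Or.inl (List.mem_cons_self)
      · exact Or.inr ⟨x, y, Adjacent.head _ _ _, rfl⟩
      · exact Or.inl (List.mem_cons_of_mem _ hz)
      · exact Or.inr ⟨a, b, Adjacent.tail _ hadj, rfl⟩
    · rintro (hz | ⟨a, b, hadj, rfl⟩)
      · rcases List.mem_cons.mp hz with rfl | hz'
        · exact Or.inl rfl
        · exact Or.inr (Or.inr (Or.inl hz'))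
      · rcases adjacent_cons_cons.mp hadj with ⟨rfl, rfl⟩ | h'
        · exact Or.inr (Or.inl rfl)
        · exact Or.inr (Or.inr (Or.inr ⟨a, b, h', rfl⟩))

lemma adjacent_ins {l : List ℚ} {x y : ℚ} (h : Adjacent l x y) :
    Adjacent (ins l) x (mediant x y) ∧ Adjacent (ins l) (mediant x y) y := by
  induction h with
  | head x y t =>
    rw [ins_cons_cons]
    obtain ⟨r, hr⟩ := ins_cons_head y t
    constructor
    · exact Adjacent.head _ _ _
    · rw [hr]; exact Adjacent.tail _ (Adjacent.head _ _ _)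
  | tail a h' ih =>
    obtain ⟨p, q, r, rfl⟩ := adjacent_shape h'
    rw [ins_cons_cons]
    exact ⟨Adjacent.tail _ (Adjacent.tail _ ih.1), Adjacent.tail _ (Adjacent.tail _ ih.2)⟩

lemma chain'_ins {S : ℚ → ℚ → Prop} :
    ∀ (l : List ℚ), (∀ x y, Adjacent l x y → S x (mediant x y) ∧ S (mediant x y) y) →
      List.Chain' S (ins l)
  | [], _ => by rw [ins_nil]; exact List.isChain_nil
  | [a], _ => by rw [ins_single]; exact List.isChain_singleton a
  | x :: y :: t, h => by
    rw [ins_cons_cons]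
    obtain ⟨r, hr⟩ := ins_cons_head y t
    refine List.isChain_cons_cons.mpr ⟨(h x y (Adjacent.head _ _ _)).1, ?_⟩
    rw [hr]
    refine List.isChain_cons.mpr ⟨?_, ?_⟩
    · intro b hb
      rw [List.head?_cons, Option.mem_some_iff] at hb
      subst hb
      exact (h x y (Adjacent.head _ _ _)).2
    · rw [← hr]
      exact chain'_ins (y :: t) fun a b hadj => h a b (Adjacent.tail _ hadj)

lemma ins_head : ∀ (l : List ℚ), (ins l).head? = l.head?
  | [] => rfl
  | [a] => rfl
  | x :: y :: t => by rw [ins_cons_cons]; rfl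

lemma ins_last : ∀ (l : List ℚ), (ins l).getLast? = l.getLast?
  | [] => rfl
  | [a] => rfl
  | x :: y :: t => by
    obtain ⟨r, hr⟩ := ins_cons_head y t
    simp only [ins_cons_cons, hr, List.getLast?_cons_cons]
    rw [← hr, ins_last (y :: t)]

end SBAux
namespace SBAux

lemma sb_chain : ∀ n, List.Chain' Adj (sbList n)
  | 0 => by
    refine List.isChain_cons_cons.mpr ⟨?_, List.isChain_singleton _⟩
    unfold Adj; decide
  | n + 1 =>
    chain'_ins (sbList n) fun x y hadj =>
      ⟨adj_mediant_left (adjacent_rel (sb_chain n) hadj),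
       adj_mediant_right (adjacent_rel (sb_chain n) hadj)⟩

lemma sb_pairwise (n : ℕ) : (sbList n).Pairwise (· < ·) :=
  List.isChain_iff_pairwise.mp ((sb_chain n).imp fun _ _ h => h.lt)

lemma sb_head : ∀ n, (sbList n).head? = some 0
  | 0 => rfl
  | n + 1 => by rw [show sbList (n+1) = ins (sbList n) from rfl, ins_head, sb_head n]

lemma sb_last : ∀ n, (sbList n).getLast? = some 1
  | 0 => rfl
  | n + 1 => by rw [show sbList (n+1) = ins (sbList n) from rfl, ins_last, sb_last n]

lemma sb_zero_mem (n : ℕ) : (0 : ℚ) ∈ sbList n :=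
  List.mem_of_mem_head? (by rw [sb_head n]; rfl)

lemma sb_one_mem (n : ℕ) : (1 : ℚ) ∈ sbList n :=
  List.mem_of_mem_getLast? (by rw [sb_last n]; rfl)

lemma sb_mono {z : ℚ} {n m : ℕ} (h : n ≤ m) (hz : z ∈ sbList n) : z ∈ sbList m := by
  induction m with
  | zero => exact Nat.le_zero.mp h ▸ hz
  | succ m ih =>
    rcases Nat.lt_or_ge n (m + 1) with h' | h'
    · exact (mem_ins (sbList m) z).mpr (Or.inl (ih (Nat.lt_succ_iff.mp h')))
    · exact le_antisymm h h' ▸ hz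

lemma adjacent_not_between : ∀ (l : List ℚ), l.Pairwise (· < ·) → ∀ {x y : ℚ},
    Adjacent l x y → ∀ z ∈ l, ¬ (x < z ∧ z < y)
  | [], _, x, y, h => absurd h adjacent_nil
  | [a], _, x, y, h => absurd h adjacent_single
  | a :: b :: t, hl, x, y, h => by
    intro z hz ⟨h1, h2⟩
    rcases adjacent_cons_cons.mp h with ⟨rfl, rfl⟩ | h'
    · rcases List.mem_cons.mp hz with rfl | hz'
      · exact lt_irrefl _ h1
      rcases List.mem_cons.mp hz' with rfl | hz''
      · exact lt_irrefl _ h2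
      · exact absurd ((List.pairwise_cons.mp (List.pairwise_cons.mp hl).2).1 z hz'')
          (not_lt.mpr h2.le)
    · rcases List.mem_cons.mp hz with rfl | hz'
      · exact absurd ((List.pairwise_cons.mp hl).1 x (adjacent_mem_left h'))
          (not_lt.mpr h1.le)
      · exact adjacent_not_between (b :: t) (List.pairwise_cons.mp hl).2 h' z hz' ⟨h1, h2⟩

lemma adjacent_of_between : ∀ (l : List ℚ), l.Pairwise (· < ·) → ∀ {x y : ℚ},
    x ∈ l → y ∈ l → x < y → (∀ z ∈ l, ¬ (x < z ∧ z < y)) → Adjacent l x y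
  | [], _, x, y, hx, _, _, _ => absurd hx List.not_mem_nil
  | a :: t, hl, x, y, hx, hy, hxy, hbet => by
    rcases List.mem_cons.mp hx with rfl | hx'
    · -- x = a
      rcases List.mem_cons.mp hy with rfl | hy'
      · exact absurd hxy (lt_irrefl _)
      · cases t with
        | nil => exact absurd hy' List.not_mem_nil
        | cons b t' =>
          have hab : x < b := (List.pairwise_cons.mp hl).1 b (List.mem_cons_self)
          have hby : ¬ (x < b ∧ b < y) := hbet b (List.mem_cons_of_mem _ (List.mem_cons_self))
          have hyb : y ≤ b := not_lt.mp fun hlt => hby ⟨hab, hlt⟩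
          rcases List.mem_cons.mp hy' with rfl | hy'' 
          · exact Adjacent.head _ _ _
          · exact absurd ((List.pairwise_cons.mp (List.pairwise_cons.mp hl).2).1 y hy'')
              (not_lt.mpr hyb)
    · -- x ∈ t
      have hya : y ≠ a := by
        rintro rfl
        exact absurd ((List.pairwise_cons.mp hl).1 x hx') (not_lt.mpr hxy.le)
      have hy' : y ∈ t := (List.mem_cons.mp hy).resolve_left hya
      exact Adjacent.tail _ (adjacent_of_between t (List.pairwise_cons.mp hl).2 hx' hy' hxy
        fun z hz => hbet z (List.mem_cons_of_mem _ hz))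

lemma isConsecutive_iff {l : List ℚ} (hl : l.Pairwise (· < ·)) {x y : ℚ} :
    IsConsecutive {z | z ∈ l} x y ↔ Adjacent l x y := by
  constructor
  · rintro ⟨hx, hy, hxy, hbet⟩
    exact adjacent_of_between l hl hx hy hxy hbet
  · intro h
    exact ⟨adjacent_mem_left h, adjacent_mem_right h,
      (adjacent_rel (List.isChain_iff_pairwise.mpr hl) h : x < y),
      adjacent_not_between l hl h⟩

lemma sternBrocot_eq : ∀ n, sternBrocot n = {z | z ∈ sbList n}
  | 0 => by
    ext z
    show z ∈ ({0, 1} : Set ℚ) ↔ z ∈ [0, 1]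
    simp
  | n + 1 => by
    ext z
    show z ∈ sternBrocot n ∪ _ ↔ _
    rw [sternBrocot_eq n]
    constructor
    · rintro (hz | ⟨x, y, hcons, rfl⟩)
      · exact (mem_ins (sbList n) z).mpr (Or.inl hz)
      · rw [isConsecutive_iff (sb_pairwise n)] at hcons
        exact (mem_ins (sbList n) _).mpr (Or.inr ⟨x, y, hcons, rfl⟩)
    · intro hz
      rcases (mem_ins (sbList n) z).mp hz with hz' | ⟨x, y, hadj, rfl⟩
      · exact Or.inl hz'
      · exact Or.inr ⟨x, y, (isConsecutive_iff (sb_pairwise n)).mpr hadj, rfl⟩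

lemma sb_consecutive {n : ℕ} {x y : ℚ} (h : Adjacent (sbList n) x y) :
    IsConsecutive (sternBrocot n) x y := by
  rw [sternBrocot_eq n]
  exact (isConsecutive_iff (sb_pairwise n)).mpr h

lemma den_bound {x y q : ℚ} (h : Adj x y) (h1 : x < q) (h2 : q < y) :
    (x.den : ℤ) + (y.den : ℤ) ≤ (q.den : ℤ) := by
  rw [rat_lt_iff] at h1 h2
  unfold Adj at h
  have e1 : 1 ≤ q.num * x.den - x.num * q.den := by omega
  have e2 : 1 ≤ y.num * q.den - q.num * y.den := by omega
  have hb : (1 : ℤ) ≤ x.den := by exact_mod_cast x.pos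
  have hd : (1 : ℤ) ≤ y.den := by exact_mod_cast y.pos
  have key : (x.den : ℤ) * (y.num * q.den - q.num * y.den)
      + (y.den : ℤ) * (q.num * x.den - x.num * q.den)
      = (q.den : ℤ) * (y.num * x.den - x.num * y.den) := by ring
  nlinarith [mul_le_mul_of_nonneg_left e2 (by linarith : (0:ℤ) ≤ x.den),
    mul_le_mul_of_nonneg_left e1 (by linarith : (0:ℤ) ≤ y.den)]

lemma mediant_den {x y : ℚ} (h : Adj x y) : (mediant x y).den = x.den + y.den := by
  have := (mediant_num_den h).2
  exact_mod_cast this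

lemma step_lemma {n : ℕ} {x y q : ℚ} (hadj : Adjacent (sbList n) x y)
    (h1 : x < q) (h2 : q < y) :
    q ∈ sbList (n + 1) ∨ ∃ x' y', Adjacent (sbList (n + 1)) x' y' ∧ x' < q ∧ q < y' ∧
      x.den + y.den < x'.den + y'.den := by
  have hAdj : Adj x y := adjacent_rel (sb_chain n) hadj
  have hmd : (mediant x y).den = x.den + y.den := mediant_den hAdj
  have hpairs := adjacent_ins hadj
  have hins : ins (sbList n) = sbList (n + 1) := rfl
  rw [hins] at hpairs
  rcases lt_trichotomy q (mediant x y) with hq | hq | hq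
  · right
    refine ⟨x, mediant x y, hpairs.1, h1, hq, ?_⟩
    rw [hmd]
    have := x.pos; omega
  · left
    exact hq ▸ adjacent_mem_right hpairs.1
  · right
    refine ⟨mediant x y, y, hpairs.2, hq, h2, ?_⟩
    rw [hmd]
    have := y.pos; omega

lemma sb_complete {q : ℚ} (h0 : 0 ≤ q) (h1 : q ≤ 1) : ∃ n, q ∈ sbList n := by
  have main : ∀ m : ℕ, (∃ n, q ∈ sbList n) ∨
      ∃ n x y, Adjacent (sbList n) x y ∧ x < q ∧ q < y ∧ m + 2 ≤ x.den + y.den := by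
    intro m
    induction m with
    | zero =>
      rcases h0.eq_or_lt with rfl | h0'
      · exact Or.inl ⟨0, sb_zero_mem 0⟩
      rcases h1.eq_or_lt with rfl | h1'
      · exact Or.inl ⟨0, sb_one_mem 0⟩
      · refine Or.inr ⟨0, 0, 1, Adjacent.head _ _ _, h0', h1', ?_⟩
        norm_num
    | succ m ih =>
      rcases ih with h | ⟨n, x, y, hadj, hx, hy, hden⟩
      · exact Or.inl h
      rcases step_lemma hadj hx hy with h | ⟨x', y', hadj', hx', hy', hden'⟩
      · exact Or.inl ⟨n + 1, h⟩
      · exact Or.inr ⟨n + 1, x', y', hadj', hx', hy', by omega⟩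
  rcases main q.den with h | ⟨n, x, y, hadj, hx, hy, hden⟩
  · exact h
  · have := den_bound (adjacent_rel (sb_chain n) hadj) hx hy
    have : x.den + y.den ≤ q.den := by exact_mod_cast this
    omega

end SBAux
namespace SBAux

lemma sb_mem_Icc : ∀ (n : ℕ) {q : ℚ}, q ∈ sbList n → 0 ≤ q ∧ q ≤ 1
  | 0, q, hq => by
    rcases List.mem_cons.mp hq with rfl | hq'
    · norm_num
    · rcases List.mem_cons.mp hq' with rfl | hq''
      · norm_num
      · exact absurd hq'' List.not_mem_nil
  | n + 1, q, hq => by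
    rcases (mem_ins (sbList n) q).mp hq with h | ⟨x, y, hadj, rfl⟩
    · exact sb_mem_Icc n h
    · have hAdj := adjacent_rel (sb_chain n) hadj
      have hx := sb_mem_Icc n (adjacent_mem_left hadj)
      have hy := sb_mem_Icc n (adjacent_mem_right hadj)
      have h1 := (adj_mediant_left hAdj).lt
      have h2 := (adj_mediant_right hAdj).lt
      exact ⟨le_trans hx.1 h1.le, le_trans h2.le hy.2⟩

end SBAux
namespace SBAux

section G

variable {lam : ℝ} {g : ℚ → ℝ}

lemma gchain (hlam : lam ∈ Set.Ioo (0 : ℝ) 1) (hg0 : g 0 = 0) (hg1 : g 1 = 1)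
    (hrec : ∀ n : ℕ, ∀ x y : ℚ, IsConsecutive (sternBrocot n) x y →
      g (mediant x y) = g x + lam * (g y - g x)) :
    ∀ n, List.Chain' (fun x y => g x < g y ∧ g y - g x ≤ (max lam (1 - lam)) ^ n) (sbList n)
  | 0 => by
    refine List.isChain_cons_cons.mpr ⟨⟨?_, ?_⟩, List.isChain_singleton _⟩
    · rw [hg0, hg1]; norm_num
    · rw [hg0, hg1, pow_zero]; norm_num
  | n + 1 => by
    apply chain'_ins
    intro x y hadj
    have hcons := sb_consecutive hadj
    have hm := hrec n x y hcons
    obtain ⟨hlt, hle⟩ := adjacent_rel (gchain hlam hg0 hg1 hrec n) hadj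
    obtain ⟨hl0, hl1⟩ := hlam
    have hc0 : (0 : ℝ) < max lam (1 - lam) := lt_of_lt_of_le hl0 (le_max_left _ _)
    have hgap : 0 < g y - g x := sub_pos.mpr hlt
    have hcn : (0:ℝ) ≤ (max lam (1 - lam)) ^ n := (pow_pos hc0 n).le
    constructor
    · constructor
      · rw [hm]; nlinarith
      · rw [hm]
        have h1 : lam * (g y - g x) ≤ max lam (1 - lam) * (max lam (1 - lam)) ^ n :=
          mul_le_mul (le_max_left _ _) hle hgap.le hc0.le
        calc g x + lam * (g y - g x) - g x = lam * (g y - g x) := by ring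
          _ ≤ max lam (1 - lam) * (max lam (1 - lam)) ^ n := h1
          _ = (max lam (1 - lam)) ^ (n + 1) := by rw [← pow_succ']
    · constructor
      · rw [hm]; nlinarith
      · rw [hm]
        have h1 : (1 - lam) * (g y - g x) ≤ max lam (1 - lam) * (max lam (1 - lam)) ^ n :=
          mul_le_mul (le_max_right _ _) hle hgap.le hc0.le
        calc g y - (g x + lam * (g y - g x)) = (1 - lam) * (g y - g x) := by ring
          _ ≤ max lam (1 - lam) * (max lam (1 - lam)) ^ n := h1
          _ = (max lam (1 - lam)) ^ (n + 1) := by rw [← pow_succ']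

lemma g_lt_of_mem (hlam : lam ∈ Set.Ioo (0 : ℝ) 1) (hg0 : g 0 = 0) (hg1 : g 1 = 1)
    (hrec : ∀ n : ℕ, ∀ x y : ℚ, IsConsecutive (sternBrocot n) x y →
      g (mediant x y) = g x + lam * (g y - g x))
    {n : ℕ} {p q : ℚ} (hp : p ∈ sbList n) (hq : q ∈ sbList n) (hpq : p < q) :
    g p < g q := by
  haveI : IsTrans ℚ (fun a b => g a < g b) := ⟨fun a b c => lt_trans⟩
  have P2 : (sbList n).Pairwise (fun a b => g a < g b) :=
    List.isChain_iff_pairwise.mp ((gchain hlam hg0 hg1 hrec n).imp fun _ _ h => h.1)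
  have P1 := sb_pairwise n
  obtain ⟨i, hi, rfl⟩ := List.mem_iff_getElem.mp hp
  obtain ⟨j, hj, rfl⟩ := List.mem_iff_getElem.mp hq
  rcases lt_trichotomy i j with hij | rfl | hij
  · exact List.pairwise_iff_getElem.mp P2 i j hi hj hij
  · exact absurd hpq (lt_irrefl _)
  · exact absurd (List.pairwise_iff_getElem.mp P1 j i hj hi hij) (not_lt.mpr hpq.le)

lemma g_mono (hlam : lam ∈ Set.Ioo (0 : ℝ) 1) (hg0 : g 0 = 0) (hg1 : g 1 = 1)
    (hrec : ∀ n : ℕ, ∀ x y : ℚ, IsConsecutive (sternBrocot n) x y →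
      g (mediant x y) = g x + lam * (g y - g x)) :
    StrictMonoOn g (Set.Icc (0 : ℚ) 1) := by
  intro p hp q hq hpq
  obtain ⟨n1, h1⟩ := sb_complete hp.1 hp.2
  obtain ⟨n2, h2⟩ := sb_complete hq.1 hq.2
  exact g_lt_of_mem hlam hg0 hg1 hrec (sb_mono (le_max_left n1 n2) h1)
    (sb_mono (le_max_right n1 n2) h2) hpq

lemma list_approx {e : ℝ} (he : 0 ≤ e) :
    ∀ (l : List ℚ), List.Chain' (fun x y => g x < g y ∧ g y - g x ≤ e) l →
      ∀ (a z : ℚ), l.head? = some a → l.getLast? = some z →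
      ∀ t : ℝ, g a ≤ t → t ≤ g z → ∃ q ∈ l, |g q - t| ≤ e
  | [], _, a, z, ha, _, _, _, _ => by simp at ha
  | [b], _, a, z, ha, hz, t, hta, htz => by
    simp only [List.head?_cons, Option.some.injEq] at ha
    simp only [List.getLast?_singleton, Option.some.injEq] at hz
    subst ha; subst hz
    refine ⟨b, List.mem_cons_self, ?_⟩
    have : t = g b := le_antisymm htz hta
    simp [this]; exact he
  | b :: c :: l', hch, a, z, ha, hz, t, hta, htz => by
    simp only [List.head?_cons, Option.some.injEq] at ha
    subst ha
    obtain ⟨⟨hbc, hbce⟩, hch'⟩ := List.isChain_cons_cons.mp hch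
    rcases le_or_gt t (g b + e) with h | h
    · exact ⟨b, List.mem_cons_self, by rw [abs_le]; constructor <;> linarith⟩
    · have hct : g c ≤ t := by linarith
      have hz' : (c :: l').getLast? = some z := by
        rw [← List.getLast?_cons_cons (l := l') (a := b)]; exact hz
      obtain ⟨q, hq, hqe⟩ := list_approx he (c :: l') hch' c z rfl hz' t hct htz
      exact ⟨q, List.mem_cons_of_mem _ hq, hqe⟩

end G

end SBAux

/-- `g_λ` is strictly increasing on `ℚ ∩ [0,1]` and extends
uniquely to a continuous increasing function from `[0,1]` onto `[0,1]`. -/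
theorem tichyUitz_strictMono_and_unique_extension
    (lam : ℝ) (hlam : lam ∈ Set.Ioo (0 : ℝ) 1)
    (g : ℚ → ℝ)
    (hg0 : g 0 = 0) (hg1 : g 1 = 1)
    (hrec : ∀ n : ℕ, ∀ x y : ℚ, IsConsecutive (sternBrocot n) x y →
      g (mediant x y) = g x + lam * (g y - g x)) :
    StrictMonoOn g (Set.Icc (0 : ℚ) 1) ∧
      ∃! G : Set.Icc (0 : ℝ) 1 → ℝ,
        Continuous G ∧ Monotone G ∧
          (∀ (q : ℚ) (hq : (q : ℝ) ∈ Set.Icc (0 : ℝ) 1), G ⟨(q : ℝ), hq⟩ = g q) ∧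
          Set.range G = Set.Icc (0 : ℝ) 1 := by
  obtain ⟨hl0, hl1⟩ := hlam
  set c : ℝ := max lam (1 - lam) with hc
  have hc0 : 0 < c := lt_of_lt_of_le hl0 (le_max_left _ _)
  have hc1 : c < 1 := max_lt hl1 (by linarith)
  have hmono : StrictMonoOn g (Set.Icc (0 : ℚ) 1) := SBAux.g_mono ⟨hl0, hl1⟩ hg0 hg1 hrec
  have hmonoOn := hmono.monotoneOn
  have h0mem : (0 : ℚ) ∈ Set.Icc (0 : ℚ) 1 := ⟨le_refl _, zero_le_one⟩
  have h1mem : (1 : ℚ) ∈ Set.Icc (0 : ℚ) 1 := ⟨zero_le_one, le_refl _⟩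
  have hgb : ∀ q : ℚ, q ∈ Set.Icc (0 : ℚ) 1 → 0 ≤ g q ∧ g q ≤ 1 := by
    intro q hq
    constructor
    · rw [← hg0]; exact hmonoOn h0mem hq hq.1
    · rw [← hg1]; exact hmonoOn hq h1mem hq.2
  -- approximation
  have happrox : ∀ t : ℝ, 0 ≤ t → t ≤ 1 → ∀ n : ℕ,
      ∃ q : ℚ, q ∈ Set.Icc (0 : ℚ) 1 ∧ |g q - t| ≤ c ^ n := by
    intro t ht0 ht1 n
    obtain ⟨q, hq, hqe⟩ := SBAux.list_approx (pow_nonneg hc0.le n) (SBAux.sbList n)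
      (SBAux.gchain ⟨hl0, hl1⟩ hg0 hg1 hrec n) 0 1 (SBAux.sb_head n) (SBAux.sb_last n) t
      (by rw [hg0]; exact ht0) (by rw [hg1]; exact ht1)
    exact ⟨q, Set.mem_Icc.mpr (SBAux.sb_mem_Icc n hq), hqe⟩
  refine ⟨hmono, ?_⟩
  -- the extension
  set G : Set.Icc (0 : ℝ) 1 → ℝ :=
    fun x => sSup (g '' {q : ℚ | 0 ≤ q ∧ (q : ℝ) ≤ (x : ℝ)}) with hGdef
  have hSne : ∀ x : Set.Icc (0 : ℝ) 1, (g '' {q : ℚ | 0 ≤ q ∧ (q : ℝ) ≤ (x : ℝ)}).Nonempty :=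
    fun x => ⟨g 0, ⟨0, ⟨le_refl _, by exact_mod_cast x.2.1⟩, rfl⟩⟩
  have hSbdd : ∀ x : Set.Icc (0 : ℝ) 1, BddAbove (g '' {q : ℚ | 0 ≤ q ∧ (q : ℝ) ≤ (x : ℝ)}) := by
    intro x
    refine ⟨1, ?_⟩
    rintro t ⟨p, ⟨hp0, hpx⟩, rfl⟩
    have hp1 : p ≤ 1 := by
      have : (p : ℝ) ≤ 1 := le_trans hpx x.2.2
      exact_mod_cast this
    exact (hgb p ⟨hp0, hp1⟩).2
  have hGq : ∀ (q : ℚ) (hq : (q : ℝ) ∈ Set.Icc (0 : ℝ) 1), G ⟨(q : ℝ), hq⟩ = g q := by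
    intro q hq
    have hq0 : (0 : ℚ) ≤ q := by exact_mod_cast hq.1
    have hq1 : q ≤ 1 := by exact_mod_cast hq.2
    apply le_antisymm
    · apply csSup_le (hSne _)
      rintro t ⟨p, ⟨hp0, hpq⟩, rfl⟩
      have hpq2 : (p : ℝ) ≤ (q : ℝ) := hpq
      have hpq' : p ≤ q := by exact_mod_cast hpq2
      exact hmonoOn ⟨hp0, le_trans hpq' hq1⟩ ⟨hq0, hq1⟩ hpq'
    · exact le_csSup (hSbdd _) ⟨q, ⟨hq0, le_refl _⟩, rfl⟩
  have hGmono : Monotone G := by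
    intro x y hxy
    apply csSup_le_csSup (hSbdd y) (hSne x)
    exact Set.image_mono fun p hp => ⟨hp.1, le_trans hp.2 hxy⟩
  have hGmem : ∀ x : Set.Icc (0 : ℝ) 1, G x ∈ Set.Icc (0 : ℝ) 1 := by
    intro x
    constructor
    · rw [← hg0]
      exact le_csSup (hSbdd x) ⟨0, ⟨le_refl _, by exact_mod_cast x.2.1⟩, rfl⟩
    · apply csSup_le (hSne x)
      rintro t ⟨p, ⟨hp0, hpx⟩, rfl⟩
      have hp1 : p ≤ 1 := by
        have : (p : ℝ) ≤ 1 := le_trans hpx x.2.2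
        exact_mod_cast this
      exact (hgb p ⟨hp0, hp1⟩).2
  -- continuity via dense range of the corestriction
  set G' : Set.Icc (0 : ℝ) 1 → Set.Icc (0 : ℝ) 1 := fun x => ⟨G x, hGmem x⟩ with hG'def
  have hG'mono : Monotone G' := fun x y hxy => hGmono hxy
  have hG'dense : DenseRange G' := by
    rw [Metric.denseRange_iff]
    intro y ε hε
    obtain ⟨n, hn⟩ := exists_pow_lt_of_lt_one hε hc1
    obtain ⟨q, hqIcc, hqe⟩ := happrox y.1 y.2.1 y.2.2 n
    have hqR : (q : ℝ) ∈ Set.Icc (0 : ℝ) 1 := by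
      constructor
      · exact_mod_cast hqIcc.1
      · exact_mod_cast hqIcc.2
    refine ⟨⟨(q : ℝ), hqR⟩, ?_⟩
    rw [Subtype.dist_eq]
    show dist y.1 (G ⟨(q : ℝ), hqR⟩) < ε
    rw [hGq q hqR, Real.dist_eq, abs_sub_comm]
    exact lt_of_le_of_lt hqe hn
  have hG'cont : Continuous G' := hG'mono.continuous_of_denseRange hG'dense
  have hGcont : Continuous G := continuous_subtype_val.comp hG'cont
  -- range
  haveI : CompactSpace (Set.Icc (0 : ℝ) 1) := isCompact_iff_compactSpace.mp isCompact_Icc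
  have hrange : Set.range G = Set.Icc (0 : ℝ) 1 := by
    apply Set.Subset.antisymm
    · rintro t ⟨x, rfl⟩; exact hGmem x
    · intro t ht
      have hclosed : IsClosed (Set.range G) := (isCompact_range hGcont).isClosed
      rw [← hclosed.closure_eq]
      rw [Metric.mem_closure_iff]
      intro ε hε
      obtain ⟨n, hn⟩ := exists_pow_lt_of_lt_one hε hc1
      obtain ⟨q, hqIcc, hqe⟩ := happrox t ht.1 ht.2 n
      have hqR : (q : ℝ) ∈ Set.Icc (0 : ℝ) 1 := by
        constructor
        · exact_mod_cast hqIcc.1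
        · exact_mod_cast hqIcc.2
      refine ⟨G ⟨(q : ℝ), hqR⟩, Set.mem_range_self _, ?_⟩
      rw [hGq q hqR, Real.dist_eq, abs_sub_comm]
      exact lt_of_le_of_lt hqe hn
  refine ⟨G, ⟨hGcont, hGmono, hGq, hrange⟩, ?_⟩
  -- uniqueness
  rintro G2 ⟨hc2, _, hq2, _⟩
  have hD : Dense {x : Set.Icc (0 : ℝ) 1 | ∃ q : ℚ, (q : ℝ) = x.1} := by
    rw [Metric.dense_iff]
    intro x r hr
    rcases lt_or_ge x.1 1 with hx1 | hx1
    · obtain ⟨q, hq1, hq2'⟩ := exists_rat_btwn (lt_min hx1 (lt_add_of_pos_right x.1 hr))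
      have hqR : (q : ℝ) ∈ Set.Icc (0 : ℝ) 1 := by
        constructor
        · exact le_trans x.2.1 hq1.le
        · exact le_trans hq2'.le (min_le_left _ _)
      refine ⟨⟨(q : ℝ), hqR⟩, ?_, ⟨q, rfl⟩⟩
      rw [Metric.mem_ball, Subtype.dist_eq]
      show dist (q : ℝ) x.1 < r
      rw [Real.dist_eq, abs_of_pos (by linarith)]
      have := lt_of_lt_of_le hq2' (min_le_right _ _)
      linarith
    · have hx1' : x.1 = 1 := le_antisymm x.2.2 hx1
      refine ⟨x, Metric.mem_ball_self hr, ⟨1, ?_⟩⟩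
      rw [hx1']; norm_num
  apply Continuous.ext_on hD hc2 hGcont
  rintro x ⟨q, hqx⟩
  have hx : x = ⟨(q : ℝ), hqx ▸ x.2⟩ := Subtype.ext hqx.symm
  rw [hx, hq2 q _, hGq q _]
end
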